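/- The increasing sequence of points of [0,∞) at which L_{ξ,1} admits a local maximum is exactly q_0 = 0 together with the points q_n = (1/2)(log Q_n − log Δ_{n−1}) for 1 ≤ n < s, and for each integer n with 1 ≤ n < s the function L_{ξ,1} coincides with L_{x_{n−1}} on the interval [q_{n−1}, q_n]. -/

import Mathlib

open Pointwise

/-- Distance from a real number to the nearest integer. -/
noncomputable def nearestInt (ξ : ℝ) : ℝ := sInf (Set.range fun m : ℤ => |ξ - (m : ℝ)|)

/-- The convex body `C_ξ(e^q) = {(x,y) : |x| ≤ e^q, |xξ - y| ≤ e^{-q}}`. -/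
def body (ξ q : ℝ) : Set (ℝ × ℝ) :=
  {p : ℝ × ℝ | |p.1| ≤ Real.exp q ∧ |p.1 * ξ - p.2| ≤ Real.exp (-q)}

/-- The `j`-th successive minimum of `C_ξ(e^q)` with respect to the lattice `ℤ²`:
the smallest `λ ≥ 0` such that `λ • C_ξ(e^q)` contains at least `j` linearly
independent points of `ℤ²`. -/
noncomputable def lam (ξ q : ℝ) (j : ℕ) : ℝ :=
  sInf {l : ℝ | 0 ≤ l ∧ ∃ v : Fin j → ℤ × ℤ,
    LinearIndependent ℝ (fun i => ((((v i).1 : ℝ)), (((v i).2 : ℝ)))) ∧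
    ∀ i, ((((v i).1 : ℝ)), (((v i).2 : ℝ))) ∈ l • body ξ q}

/-- `L_{ξ,j}(q) = log λ_j(C_ξ(e^q))`. -/
noncomputable def LL (ξ : ℝ) (j : ℕ) (q : ℝ) : ℝ := Real.log (lam ξ q j)

/-- `L_x(q)`: the logarithm of the smallest `λ ≥ 0` with `x ∈ λ • C_ξ(e^q)`, namely
`log (max (|Q| e^{-q}) (|Qξ - P| e^q))`, which equals
`max (log |Q| - q) (log |Qξ - P| + q)` (the first term being omitted when `Q = 0`,
the second when `Qξ - P = 0`). -/
noncomputable def Lx (ξ : ℝ) (x : ℤ × ℤ) (q : ℝ) : ℝ :=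
  Real.log (max (|(x.1 : ℝ)| * Real.exp (-q)) (|(x.1 : ℝ) * ξ - (x.2 : ℝ)| * Real.exp q))

/-- Data of a real number `ξ ∈ [0,1/2]` together with its simple continued fraction
expansion `ξ = [0; a 1, a 2, …]`, with partial quotients `a n ≥ 1` for `1 ≤ n < s`,
where `s ∈ ℕ* ∪ {∞}` (encoded in `WithTop ℤ`), `a (s-1) ≥ 2` if `2 ≤ s < ∞`
(`s = 1` meaning `ξ = 0`), and with `Q`, `P` the denominators and numerators of its
convergents, given by the standard recurrences with initial values
`P (-1) = Q 0 = 1`, `P 0 = Q (-1) = 0`.  The fact that `[0; a 1, a 2, …]` is indeed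
the continued fraction expansion of `ξ` is recorded through the value conditions
`hfin` (if `s < ∞` then `ξ = P (s-1) / Q (s-1)`) and `hinf` (if `s = ∞` then
`P n / Q n → ξ`), which, given the constraints on the `a n`, characterize it. -/
structure CFData where
  ξ : ℝ
  s : WithTop ℤ
  a : ℤ → ℤ
  Q : ℤ → ℤ
  P : ℤ → ℤ
  hξ0 : 0 ≤ ξ
  hξhalf : ξ ≤ 1 / 2
  hs : 1 ≤ s
  ha : ∀ n : ℤ, 1 ≤ n → (n : WithTop ℤ) < s → 1 ≤ a n
  halast : ∀ n : ℤ, 2 ≤ n → (n : WithTop ℤ) = s → 2 ≤ a (n - 1)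
  hQ0 : Q 0 = 1
  hQneg : Q (-1) = 0
  hP0 : P 0 = 0
  hPneg : P (-1) = 1
  hQrec : ∀ n : ℤ, 1 ≤ n → (n : WithTop ℤ) < s → Q n = Q (n - 2) + a n * Q (n - 1)
  hPrec : ∀ n : ℤ, 1 ≤ n → (n : WithTop ℤ) < s → P n = P (n - 2) + a n * P (n - 1)
  hfin : ∀ k : ℤ, (k : WithTop ℤ) = s → ξ = (P (k - 1) : ℝ) / (Q (k - 1) : ℝ)
  hinf : s = ⊤ → Filter.Tendsto (fun n : ℕ => (P (n : ℤ) : ℝ) / (Q (n : ℤ) : ℝ))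
      Filter.atTop (nhds ξ)

namespace CFData

/-- `Δ n = |Q n • ξ - P n|`. -/
noncomputable def Δ (c : CFData) (n : ℤ) : ℝ := |(c.Q n : ℝ) * c.ξ - (c.P n : ℝ)|

/-- `Q (n,t) = Q (n-2) + t * Q (n-1)`. -/
def Qt (c : CFData) (n t : ℤ) : ℤ := c.Q (n - 2) + t * c.Q (n - 1)

/-- `P (n,t) = P (n-2) + t * P (n-1)`. -/
def Pt (c : CFData) (n t : ℤ) : ℤ := c.P (n - 2) + t * c.P (n - 1)

/-- `Δ (n,t) = |Q (n,t) • ξ - P (n,t)|`. -/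
noncomputable def Δt (c : CFData) (n t : ℤ) : ℝ := |(c.Qt n t : ℝ) * c.ξ - (c.Pt n t : ℝ)|

/-- `q n = (log (Q n) - log (Δ (n-1))) / 2`; in particular `q 0 = 0`. -/
noncomputable def qcrit (c : CFData) (n : ℤ) : ℝ :=
  (Real.log (c.Q n : ℝ) - Real.log (c.Δ (n - 1))) / 2

end CFData
namespace CFHelp

open Real Filter

variable (c : CFData)

/-- sign helper -/
def ε (n : ℤ) : ℤ := if Even n then 1 else -1

lemma ε_sq (n : ℤ) : ε n * ε n = 1 := by unfold ε; split <;> norm_num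

lemma ε_succ (n : ℤ) : ε (n + 1) = - ε n := by
  unfold ε
  rcases Int.even_or_odd n with h | h
  · simp [h, Int.even_add_one, Int.not_even_iff_odd, (by simpa using h : ¬ Odd n)]
  · have h1 : ¬ Even n := by simpa [Int.not_even_iff_odd] using h
    have h2 : Even (n + 1) := by simpa [Int.even_add_one] using h1
    simp [h1, h2]

lemma ε_pred (n : ℤ) : ε (n - 1) = - ε n := by
  have := ε_succ (n - 1); simp at this; rw [this]; ring

lemma ε_abs (n : ℤ) : |ε n| = 1 := by unfold ε; split <;> norm_num

lemma ε_cases (n : ℤ) : ε n = 1 ∨ ε n = -1 := by unfold ε; split <;> simp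

/-- validity predicate -/
def V (n : ℤ) : Prop := (n : WithTop ℤ) < c.s

lemma V0 : V c 0 := by
  have := c.hs
  refine lt_of_lt_of_le ?_ this
  exact_mod_cast (by norm_num : (0:ℤ) < 1)

lemma Vmono {m n : ℤ} (h : m ≤ n) (hn : V c n) : V c m :=
  lt_of_le_of_lt (by exact_mod_cast h) hn

/-- δ n = Q n ξ - P n -/
noncomputable def δ (n : ℤ) : ℝ := (c.Q n : ℝ) * c.ξ - (c.P n : ℝ)

/-- σ n = ε n * δ n -/
noncomputable def σ (n : ℤ) : ℝ := (ε n : ℝ) * δ c n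

lemma δ_neg : δ c (-1) = -1 := by unfold δ; rw [c.hQneg, c.hPneg]; norm_num

lemma δ_zero : δ c 0 = c.ξ := by unfold δ; rw [c.hQ0, c.hP0]; norm_num

lemma σ_neg : σ c (-1) = 1 := by
  unfold σ; rw [δ_neg]; unfold ε; norm_num

lemma σ_zero : σ c 0 = c.ξ := by
  unfold σ; rw [δ_zero]; unfold ε; norm_num

lemma δ_rec {n : ℤ} (h1 : 1 ≤ n) (h2 : V c n) :
    δ c n = δ c (n - 2) + (c.a n : ℝ) * δ c (n - 1) := by
  unfold δ
  rw [c.hQrec n h1 h2, c.hPrec n h1 h2]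
  push_cast
  ring

lemma ε_pred2 (n : ℤ) : ε (n - 2) = ε n := by
  have h1 : ε (n - 2) = - ε (n - 1) := by
    have := ε_pred (n - 1); rw [show n - 1 - 1 = n - 2 by ring] at this; exact this
  rw [h1, ε_pred n]; ring

lemma σ_rec {n : ℤ} (h1 : 1 ≤ n) (h2 : V c n) :
    σ c n = σ c (n - 2) - (c.a n : ℝ) * σ c (n - 1) := by
  unfold σ
  rw [δ_rec c h1 h2, ← ε_pred2 n, show ε (n-1) = - ε (n-2) by rw [ε_pred, ε_pred2]]
  push_cast
  ring

lemma Qpos' : ∀ n : ℤ, 0 ≤ n → V c n → 1 ≤ c.Q n ∧ 0 ≤ c.Q (n - 1) := by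
  refine Int.le_induction ?_ ?_
  · intro _; rw [c.hQ0]; rw [show (0:ℤ) - 1 = -1 by ring, c.hQneg]; omega
  · intro n hn ih hv
    have hvn : V c n := Vmono c (by omega) hv
    obtain ⟨h1, h0⟩ := ih hvn
    have ha : 1 ≤ c.a (n + 1) := c.ha (n + 1) (by omega) hv
    have hrec := c.hQrec (n + 1) (by omega) hv
    rw [show n + 1 - 2 = n - 1 by ring, show n + 1 - 1 = n by ring] at hrec
    constructor
    · rw [hrec]; nlinarith
    · rw [show n + 1 - 1 = n by ring]; omega

lemma Qpos {n : ℤ} (hn : 0 ≤ n) (hv : V c n) : 1 ≤ c.Q n := (Qpos' c n hn hv).1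

lemma Qmono {n : ℤ} (hn : 1 ≤ n) (hv : V c n) : c.Q (n - 1) ≤ c.Q n := by
  rcases eq_or_lt_of_le hn with h | h
  · subst h
    have ha := c.ha 1 le_rfl hv
    have hrec := c.hQrec 1 le_rfl hv
    rw [show (1:ℤ) - 2 = -1 by ring, show (1:ℤ) - 1 = 0 by ring, c.hQneg, c.hQ0] at hrec
    rw [show (1:ℤ) - 1 = 0 by ring, c.hQ0]
    omega
  · have h2 : 2 ≤ n := h
    have hrec := c.hQrec n hn hv
    have ha : 1 ≤ c.a n := c.ha n hn hv
    have hq2 : 1 ≤ c.Q (n - 2) := Qpos c (by omega) (Vmono c (by omega) hv)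
    have hq1 : 1 ≤ c.Q (n - 1) := Qpos c (by omega) (Vmono c (by omega) hv)
    nlinarith

lemma Qmono' {m n : ℤ} (hm : 0 ≤ m) (hmn : m ≤ n) (hv : V c n) : c.Q m ≤ c.Q n := by
  have key : ∀ k : ℤ, m ≤ k → V c k → c.Q m ≤ c.Q k := by
    refine Int.le_induction ?_ ?_
    · intro _; exact le_rfl
    · intro k hk ih hv
      have := Qmono c (n := k + 1) (by omega) hv
      rw [show k + 1 - 1 = k by ring] at this
      exact le_trans (ih (Vmono c (by omega) hv)) this
  exact key n hmn hv

/-- determinant identity: Q n * P (n-1) - P n * Q (n-1) = ε n -/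
lemma Dlem : ∀ n : ℤ, 0 ≤ n → V c n → c.Q n * c.P (n - 1) - c.P n * c.Q (n - 1) = ε n := by
  refine Int.le_induction ?_ ?_
  · intro _
    rw [c.hQ0, c.hP0, show (0:ℤ) - 1 = -1 by ring, c.hQneg, c.hPneg]
    unfold ε; norm_num
  · intro n hn ih hv
    have hvn : V c n := Vmono c (by omega) hv
    have hQ := c.hQrec (n + 1) (by omega) hv
    have hP := c.hPrec (n + 1) (by omega) hv
    rw [show n + 1 - 2 = n - 1 by ring, show n + 1 - 1 = n by ring] at hQ hP
    rw [show n + 1 - 1 = n by ring, hQ, hP, ε_succ]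
    have := ih hvn
    linear_combination (-1 : ℤ) * this

/-- star identity: σ (n-1) * Q n + σ n * Q (n-1) = 1 -/
lemma star {n : ℤ} (hn : 0 ≤ n) (hv : V c n) :
    σ c (n - 1) * (c.Q n : ℝ) + σ c n * (c.Q (n - 1) : ℝ) = 1 := by
  have hD := Dlem c n hn hv
  have hDR : (c.Q n : ℝ) * (c.P (n - 1) : ℝ) - (c.P n : ℝ) * (c.Q (n - 1) : ℝ) = (ε n : ℝ) := by
    exact_mod_cast congrArg (fun z : ℤ => (z : ℝ)) hD
  unfold σ δ
  rw [ε_pred n]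
  push_cast
  have hsq : (ε n : ℝ) * (ε n : ℝ) = 1 := by exact_mod_cast ε_sq n
  linear_combination (ε n : ℝ) * hDR + hsq

lemma coe_lt_coe' {k K : ℤ} : ((k : WithTop ℤ) < (K : WithTop ℤ)) ↔ k < K := WithTop.coe_lt_coe

lemma coe_le_coe' {k K : ℤ} : ((k : WithTop ℤ) ≤ (K : WithTop ℤ)) ↔ k ≤ K := WithTop.coe_le_coe

lemma σ_last {k : ℤ} (h : ((k + 1 : ℤ) : WithTop ℤ) = c.s) : σ c k = 0 := by
  have hge : (1 : WithTop ℤ) ≤ ((k + 1 : ℤ) : WithTop ℤ) := by rw [h]; exact c.hs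
  have h1 : (1 : ℤ) ≤ k + 1 := by exact_mod_cast hge
  have hvk : V c k := by
    unfold V; rw [← h]; exact_mod_cast (by omega : k < k + 1)
  have hQk : 1 ≤ c.Q k := Qpos c (by omega) hvk
  have hx := c.hfin (k + 1) h
  rw [show k + 1 - 1 = k by ring] at hx
  have hQne : (c.Q k : ℝ) ≠ 0 := by positivity
  unfold σ δ
  rw [hx]
  field_simp
  ring

noncomputable def r (n : ℤ) : ℝ := (c.P n : ℝ) / (c.Q n : ℝ)

lemma δ_eq_r {n : ℤ} (hn : 0 ≤ n) (hv : V c n) : δ c n = (c.Q n : ℝ) * (c.ξ - r c n) := by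
  have hQ : (0:ℝ) < (c.Q n : ℝ) := by exact_mod_cast Qpos c hn hv
  unfold δ r
  field_simp

lemma rdiff {n : ℤ} (hn : 0 ≤ n) (hv : V c (n + 1)) :
    r c (n + 1) - r c n = (ε n : ℝ) / ((c.Q n : ℝ) * (c.Q (n + 1) : ℝ)) := by
  have hQn : (0:ℝ) < (c.Q n : ℝ) := by exact_mod_cast Qpos c hn (Vmono c (by omega) hv)
  have hQn1 : (0:ℝ) < (c.Q (n + 1) : ℝ) := by exact_mod_cast Qpos c (by omega) hv
  have hD := Dlem c (n + 1) (by omega) hv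
  rw [show n + 1 - 1 = n by ring, ε_succ] at hD
  have hDR : (c.Q (n+1) : ℝ) * (c.P n : ℝ) - (c.P (n+1) : ℝ) * (c.Q n : ℝ) = -(ε n : ℝ) := by
    exact_mod_cast congrArg (fun z : ℤ => (z : ℝ)) hD
  unfold r
  rw [div_sub_div _ _ hQn1.ne' hQn.ne', div_eq_div_iff (by positivity) (by positivity)]
  linear_combination (-(c.Q n : ℝ) * (c.Q (n+1) : ℝ)) * hDR

lemma Qstep2 {n : ℤ} (hn : 0 ≤ n) (hv : V c (n + 2)) : c.Q n < c.Q (n + 2) := by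
  have hrec := c.hQrec (n + 2) (by omega) hv
  rw [show n + 2 - 2 = n by ring, show n + 2 - 1 = n + 1 by ring] at hrec
  have ha : 1 ≤ c.a (n + 2) := c.ha (n + 2) (by omega) hv
  have hq1 : 1 ≤ c.Q (n + 1) := Qpos c (by omega) (Vmono c (by omega) hv)
  nlinarith

lemma rstep2 {n : ℤ} (hn : 0 ≤ n) (hv : V c (n + 2)) :
    (ε n : ℝ) * (r c (n + 2) - r c n) > 0 := by
  have h1 := rdiff c hn (Vmono c (by omega) hv)
  have h2 := rdiff c (n := n + 1) (by omega) (by rw [show n + 1 + 1 = n + 2 by ring]; exact hv)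
  rw [show n + 1 + 1 = n + 2 by ring] at h2
  have hQn : (0:ℝ) < (c.Q n : ℝ) := by
    exact_mod_cast Qpos c hn (Vmono c (by omega) hv)
  have hQn1 : (0:ℝ) < (c.Q (n+1) : ℝ) := by
    exact_mod_cast Qpos c (by omega) (Vmono c (by omega) hv)
  have hQn2 : (0:ℝ) < (c.Q (n+2) : ℝ) := by exact_mod_cast Qpos c (by omega) hv
  have hQlt : (c.Q n : ℝ) < (c.Q (n+2) : ℝ) := by exact_mod_cast Qstep2 c hn hv
  have hsq : (ε n : ℝ) * (ε n : ℝ) = 1 := by exact_mod_cast ε_sq n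
  have hsucc : (ε (n+1) : ℝ) = -(ε n : ℝ) := by exact_mod_cast ε_succ n
  have key : r c (n + 2) - r c n =
      (ε n : ℝ) * (1 / ((c.Q n : ℝ) * (c.Q (n+1) : ℝ)) - 1 / ((c.Q (n+1) : ℝ) * (c.Q (n+2) : ℝ))) := by
    have : r c (n+2) - r c n = (r c (n+2) - r c (n+1)) + (r c (n+1) - r c n) := by ring
    rw [this, h1, h2, hsucc]
    field_simp
    ring
  rw [key, ← mul_assoc, hsq, one_mul]
  have : 1 / ((c.Q (n+1) : ℝ) * (c.Q (n+2) : ℝ)) < 1 / ((c.Q n : ℝ) * (c.Q (n+1) : ℝ)) := by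
    apply one_div_lt_one_div_of_lt
    · positivity
    · nlinarith
  linarith

lemma σ_pos_inf (hS : c.s = ⊤) : ∀ k : ℤ, -1 ≤ k → 0 < σ c k := by
  have hVall : ∀ n : ℤ, V c n := by intro n; unfold V; rw [hS]; exact WithTop.coe_lt_top n
  intro k hk
  rcases eq_or_lt_of_le hk with h | h
  · rw [← h, σ_neg]; norm_num
  have hk0 : 0 ≤ k := by omega
  -- limit along indices k + 2 + 2j
  have htend : Filter.Tendsto (fun j : ℕ => r c (k + 2 + 2 * (j : ℤ))) atTop (nhds c.ξ) := by
    have hbase := c.hinf hS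
    have hg : Filter.Tendsto (fun j : ℕ => (k + 2).toNat + 2 * j) atTop atTop := by
      apply Filter.tendsto_atTop_atTop_of_monotone
      · intro a b hab; simp only [Nat.add_le_add_iff_left]; omega
      · intro b; exact ⟨b, by omega⟩
    have hcomp := hbase.comp hg
    have hfe : (fun j : ℕ => r c (k + 2 + 2 * (j : ℤ))) =
        ((fun n : ℕ => ((c.P (n : ℤ) : ℝ) / (c.Q (n : ℤ) : ℝ))) ∘ (fun j : ℕ => (k + 2).toNat + 2 * j)) := by
      funext j
      unfold r
      simp only [Function.comp_apply]
      congr 2 <;>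
      · congr 1
        push_cast [Int.toNat_of_nonneg (by omega : (0:ℤ) ≤ k + 2)]
        ring
    rw [hfe]
    exact hcomp
  -- monotone sequence
  have hmono : Monotone (fun j : ℕ => (ε k : ℝ) * r c (k + 2 + 2 * (j : ℤ))) := by
    apply monotone_nat_of_le_succ
    intro j
    have heps : ε (k + 2 + 2 * (j:ℤ)) = ε k := by
      unfold ε
      have : Even (2 + 2 * (j:ℤ)) := by exact ⟨1 + j, by ring⟩
      rcases Int.even_or_odd k with hev | hod
      · have : Even (k + 2 + 2*(j:ℤ)) := by rcases hev with ⟨m, hm⟩; exact ⟨m + 1 + j, by omega⟩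
        simp [this, hev]
      · have h1 : ¬ Even k := by simpa [Int.not_even_iff_odd] using hod
        have h2 : ¬ Even (k + 2 + 2*(j:ℤ)) := by
          rcases hod with ⟨m, hm⟩
          rw [Int.not_even_iff_odd]
          exact ⟨m + 1 + j, by omega⟩
        simp [h1, h2]
    have hst := rstep2 c (n := k + 2 + 2 * (j:ℤ)) (by omega) (hVall _)
    rw [heps] at hst
    have : k + 2 + 2 * ((j:ℤ) + 1) = k + 2 + 2*(j:ℤ) + 2 := by ring
    push_cast
    rw [this]
    nlinarith
  have hle : (ε k : ℝ) * r c (k + 2 + 2 * ((0:ℕ):ℤ)) ≤ (ε k : ℝ) * c.ξ := by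
    have htend2 : Filter.Tendsto (fun j : ℕ => (ε k : ℝ) * r c (k + 2 + 2 * (j : ℤ)))
        atTop (nhds ((ε k : ℝ) * c.ξ)) := htend.const_mul _
    exact hmono.ge_of_tendsto htend2 0
  have hst := rstep2 c (n := k) hk0 (hVall _)
  have hlt : (ε k : ℝ) * r c k < (ε k : ℝ) * c.ξ := by
    norm_num at hle
    nlinarith
  have hQk : (0:ℝ) < (c.Q k : ℝ) := by exact_mod_cast Qpos c hk0 (hVall _)
  have hδ := δ_eq_r c hk0 (hVall _)
  unfold σ
  rw [hδ]
  nlinarith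

lemma σ_fin_chain {K : ℤ} (hS : c.s = ((K : ℤ) : WithTop ℤ)) (hK : 2 ≤ K) :
    ∀ j : ℕ, -1 ≤ K - 2 - (j : ℤ) → 0 < σ c (K - 2 - (j : ℤ)) ∧ 0 ≤ σ c (K - 1 - (j : ℤ)) := by
  have hVK : ∀ m : ℤ, m ≤ K - 1 → V c m := by
    intro m hm; unfold V; rw [hS]; exact_mod_cast (by omega : m < K)
  have hlast : σ c (K - 1) = 0 := by
    apply σ_last
    rw [show K - 1 + 1 = K by ring, hS]
  have hbase : 0 < σ c (K - 2) := by
    have hstar := star c (n := K - 1) (by omega) (hVK _ (by omega))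
    rw [show K - 1 - 1 = K - 2 by ring, hlast] at hstar
    have hQ : (0:ℝ) < (c.Q (K - 1) : ℝ) := by exact_mod_cast Qpos c (by omega) (hVK _ le_rfl)
    nlinarith
  intro j
  induction j with
  | zero => intro _; norm_num; exact ⟨hbase, by rw [hlast]⟩
  | succ j ih =>
    intro hj
    have hj' : -1 ≤ K - 2 - (j : ℤ) := by push_cast at hj ⊢; omega
    obtain ⟨h1, h2⟩ := ih hj'
    have hidx : K - 1 - ((j:ℤ) + 1) = K - 2 - (j:ℤ) := by ring
    push_cast
    rw [hidx]
    refine ⟨?_, le_of_lt h1⟩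
    -- need 0 < σ (K - 2 - (j+1)) = σ (K - 3 - j)
    set m : ℤ := K - 3 - (j : ℤ) with hm
    have hm1 : -1 ≤ m := by push_cast at hj; omega
    have hrec := σ_rec c (n := m + 2) (by omega) (hVK _ (by omega))
    rw [show m + 2 - 2 = m by ring, show m + 2 - 1 = m + 1 by ring] at hrec
    have ha : 1 ≤ c.a (m + 2) := c.ha (m + 2) (by omega) (hVK _ (by omega))
    have hσ1 : 0 < σ c (m + 1) := by rw [show m + 1 = K - 2 - (j:ℤ) by omega]; exact h1
    have hσ2 : 0 ≤ σ c (m + 2) := by rw [show m + 2 = K - 1 - (j:ℤ) by omega]; exact h2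
    have haR : (1:ℝ) ≤ (c.a (m + 2) : ℝ) := by exact_mod_cast ha
    have : σ c m = σ c (m + 2) + (c.a (m+2) : ℝ) * σ c (m + 1) := by linarith [hrec]
    rw [show K - 2 - ((j:ℤ) + 1) = m by omega]
    rw [this]
    nlinarith

lemma σ_pos {k : ℤ} (hk : -1 ≤ k) (hv : ((k + 2 : ℤ) : WithTop ℤ) ≤ c.s) : 0 < σ c k := by
  rcases eq_or_lt_of_le hk with hneg | hk0
  · rw [← hneg, σ_neg]; norm_num
  rcases eq_top_or_lt_top c.s with hS | hS
  · exact σ_pos_inf c hS k hk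
  · obtain ⟨K, hK⟩ := WithTop.ne_top_iff_exists.mp hS.ne
    have hS' : c.s = ((K : ℤ) : WithTop ℤ) := hK.symm
    rw [hS'] at hv
    have hkK : k + 2 ≤ K := by exact_mod_cast hv
    have hK2 : 2 ≤ K := by omega
    have := σ_fin_chain c hS' hK2 (K - 2 - k).toNat
      (by rw [Int.toNat_of_nonneg (by omega)]; omega)
    rw [Int.toNat_of_nonneg (by omega)] at this
    have heq : K - 2 - (K - 2 - k) = k := by ring
    rw [heq] at this
    exact this.1

lemma σ_nonneg {k : ℤ} (hk : -1 ≤ k) (hv : V c k) : 0 ≤ σ c k := by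
  rcases eq_top_or_lt_top c.s with hS | hS
  · exact le_of_lt (σ_pos_inf c hS k hk)
  · obtain ⟨K, hK⟩ := WithTop.ne_top_iff_exists.mp hS.ne
    have hS' : c.s = ((K : ℤ) : WithTop ℤ) := hK.symm
    have hvk : k < K := by
      have := hv; unfold V at this; rw [hS'] at this; exact_mod_cast this
    rcases eq_or_lt_of_le (by omega : k ≤ K - 1) with h | h
    · rw [h]
      rw [σ_last c (by rw [show K - 1 + 1 = K by ring, hS'])]
    · apply le_of_lt
      apply σ_pos c hk
      rw [hS']
      exact_mod_cast (by omega : k + 2 ≤ K)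

lemma succ_le_of_lt' {k : ℤ} (h : (k : WithTop ℤ) < c.s) : ((k + 1 : ℤ) : WithTop ℤ) ≤ c.s := by
  rcases eq_top_or_lt_top c.s with hS | hS
  · rw [hS]; exact le_top
  · obtain ⟨K, hK⟩ := WithTop.ne_top_iff_exists.mp hS.ne
    rw [← hK] at h ⊢
    have : k < K := by exact_mod_cast h
    exact_mod_cast (by omega : k + 1 ≤ K)

lemma lt_of_succ_le' {k : ℤ} (h : ((k + 1 : ℤ) : WithTop ℤ) ≤ c.s) : V c k :=
  lt_of_lt_of_le (by exact_mod_cast (by omega : k < k + 1)) h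

lemma eq_or_succ_le {m : ℤ} (h : ((m : ℤ) : WithTop ℤ) ≤ c.s) :
    ((m : ℤ) : WithTop ℤ) = c.s ∨ ((m + 1 : ℤ) : WithTop ℤ) ≤ c.s := by
  rcases eq_or_lt_of_le h with h1 | h1
  · exact Or.inl h1
  · exact Or.inr (succ_le_of_lt' c h1)

lemma δ_eq_εσ (n : ℤ) : δ c n = (ε n : ℝ) * σ c n := by
  unfold σ
  rw [← mul_assoc]
  have : (ε n : ℝ) * (ε n : ℝ) = 1 := by exact_mod_cast ε_sq n
  rw [this, one_mul]

lemma Δ_eq_σ {n : ℤ} (hn : -1 ≤ n) (hv : V c n) : c.Δ n = σ c n := by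
  have h1 : c.Δ n = |δ c n| := rfl
  rw [h1, δ_eq_εσ c n, abs_mul]
  have : |(ε n : ℝ)| = 1 := by exact_mod_cast ε_abs n
  rw [this, one_mul, abs_of_nonneg (σ_nonneg c hn hv)]

lemma Δ_nonneg (n : ℤ) : 0 ≤ c.Δ n := abs_nonneg _

lemma Δ_pos {k : ℤ} (hk : -1 ≤ k) (hv : ((k + 2 : ℤ) : WithTop ℤ) ≤ c.s) : 0 < c.Δ k := by
  rw [Δ_eq_σ c hk (lt_of_succ_le' c (le_trans (by exact_mod_cast (by omega : k + 1 ≤ k + 2)) hv))]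
  exact σ_pos c hk hv

lemma Δ_zero_last {k : ℤ} (h : ((k + 1 : ℤ) : WithTop ℤ) = c.s) : c.Δ k = 0 := by
  have hv : V c k := by unfold V; rw [← h]; exact_mod_cast (by omega : k < k + 1)
  have hge : (1 : WithTop ℤ) ≤ ((k + 1 : ℤ) : WithTop ℤ) := by rw [h]; exact c.hs
  have h1 : (1:ℤ) ≤ k + 1 := by exact_mod_cast hge
  rw [Δ_eq_σ c (by omega) hv, σ_last c h]

lemma Δ_neg_one : c.Δ (-1) = 1 := by
  unfold CFData.Δ; rw [c.hQneg, c.hPneg]; norm_num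

lemma Δ_zero_eq : c.Δ 0 = c.ξ := by
  unfold CFData.Δ; rw [c.hQ0, c.hP0]; push_cast; rw [abs_of_nonneg (by linarith [c.hξ0])]; ring_nf

lemma σ_one (hv : V c 1) : σ c 1 = 1 - (c.a 1 : ℝ) * c.ξ := by
  have := σ_rec c (n := 1) le_rfl hv
  rw [show (1:ℤ) - 2 = -1 by ring, show (1:ℤ) - 1 = 0 by ring, σ_neg, σ_zero] at this
  linarith

lemma a1_ge_two (h : (1 : WithTop ℤ) < c.s) : 2 ≤ c.a 1 := by
  have h2 : ((2:ℤ) : WithTop ℤ) ≤ c.s := by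
    have := succ_le_of_lt' c (k := 1) (by exact_mod_cast h)
    exact_mod_cast this
  by_contra hcon
  have ha1 : c.a 1 = 1 := by
    have := c.ha 1 le_rfl (by exact_mod_cast h)
    omega
  rcases eq_or_succ_le c h2 with hS | h3
  · have := c.halast 2 le_rfl hS
    rw [show (2:ℤ) - 1 = 1 by ring] at this
    omega
  · -- 3 ≤ s
    have hv2 : V c 2 := lt_of_succ_le' c (by exact_mod_cast h3)
    have hσ2 := σ_rec c (n := 2) (by omega) hv2
    rw [show (2:ℤ) - 2 = 0 by ring, show (2:ℤ) - 1 = 1 by ring, σ_zero,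
      σ_one c (lt_of_succ_le' c (by exact_mod_cast h2))] at hσ2
    rw [ha1] at hσ2
    push_cast at hσ2
    have ha2 : 1 ≤ c.a 2 := c.ha 2 (by omega) hv2
    have ha2R : (1:ℝ) ≤ (c.a 2 : ℝ) := by exact_mod_cast ha2
    have hξ : c.ξ ≤ 1/2 := c.hξhalf
    have hσ2nn : 0 ≤ σ c 2 := σ_nonneg c (by omega) hv2
    rcases eq_or_succ_le c h3 with hS | h4
    · have := c.halast 3 (by omega) hS
      rw [show (3:ℤ) - 1 = 2 by ring] at this
      have : (2:ℝ) ≤ (c.a 2 : ℝ) := by exact_mod_cast this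
      nlinarith
    · have hσ2pos : 0 < σ c 2 := σ_pos c (by omega) (by exact_mod_cast h4)
      nlinarith

lemma Qstrict {n : ℤ} (hn : 0 ≤ n) (hv : V c (n + 1)) : c.Q n < c.Q (n + 1) := by
  rcases eq_or_lt_of_le hn with h | h
  · rw [← h]
    rw [c.hQ0]
    have hrec := c.hQrec 1 le_rfl (by rw [← h] at hv; exact_mod_cast hv)
    rw [show (1:ℤ) - 2 = -1 by ring, show (1:ℤ) - 1 = 0 by ring, c.hQneg, c.hQ0] at hrec
    have ha := a1_ge_two c (by
      rw [← h] at hv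
      exact_mod_cast hv)
    rw [show (0:ℤ) + 1 = 1 by ring]
    omega
  · have hrec := c.hQrec (n + 1) (by omega) hv
    rw [show n + 1 - 2 = n - 1 by ring, show n + 1 - 1 = n by ring] at hrec
    have ha : 1 ≤ c.a (n + 1) := c.ha (n + 1) (by omega) hv
    have hq2 : 1 ≤ c.Q (n - 1) := Qpos c (by omega) (Vmono c (by omega) hv)
    have hq1 : 1 ≤ c.Q n := Qpos c (by omega) (Vmono c (by omega) hv)
    nlinarith

lemma Δ_dec {n : ℤ} (hn : 0 ≤ n) (hv : ((n + 1 : ℤ) : WithTop ℤ) ≤ c.s) :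
    c.Δ n < c.Δ (n - 1) := by
  rcases eq_or_succ_le c hv with hS | h2
  · -- n + 1 = s : Δ n = 0 < Δ (n-1)
    rw [Δ_zero_last c hS]
    apply Δ_pos c (by omega)
    rw [show n - 1 + 2 = n + 1 by ring]
    rw [hS]
  · -- n + 2 ≤ s
    rw [show n + 1 + 1 = n + 2 by ring] at h2
    have hv1 : V c (n + 1) := lt_of_succ_le' c (by rw [show n + 1 + 1 = n + 2 by ring]; exact h2)
    have hvn : V c n := Vmono c (by omega) hv1
    have hrec := σ_rec c (n := n + 1) (by omega) hv1
    rw [show n + 1 - 2 = n - 1 by ring, show n + 1 - 1 = n by ring] at hrec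
    have ha : 1 ≤ c.a (n + 1) := c.ha (n + 1) (by omega) hv1
    have haR : (1:ℝ) ≤ (c.a (n + 1) : ℝ) := by exact_mod_cast ha
    have hσn : 0 < σ c n := σ_pos c (by omega) (by exact_mod_cast h2)
    have hσn1 : 0 ≤ σ c (n + 1) := σ_nonneg c (by omega) hv1
    rw [Δ_eq_σ c (by omega) hvn, Δ_eq_σ c (by omega) (Vmono c (by omega) hvn)]
    -- σ (n-1) = σ (n+1) + a (n+1) σ n
    have hkey : σ c (n - 1) = σ c (n + 1) + (c.a (n+1) : ℝ) * σ c n := by linarith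
    rcases eq_or_succ_le c h2 with hS2 | h3
    · -- n + 2 = s : a (n+1) ≥ 2
      have := c.halast (n + 2) (by omega) hS2
      rw [show n + 2 - 1 = n + 1 by ring] at this
      have h2R : (2:ℝ) ≤ (c.a (n + 1) : ℝ) := by exact_mod_cast this
      nlinarith
    · have hσn1' : 0 < σ c (n + 1) := σ_pos c (by omega) (by
        rw [show n + 1 + 2 = n + 2 + 1 by ring]; exact h3)
      nlinarith

lemma Δ_le_one {n : ℤ} (hn : -1 ≤ n) (hv : V c n) : c.Δ n ≤ 1 := by
  rcases eq_or_succ_le c (succ_le_of_lt' c hv) with hS | h2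
  · rw [Δ_zero_last c hS]; norm_num
  · rw [show n + 1 + 1 = (n + 1) + 1 by ring] at h2
    have hv1 : V c (n + 1) := lt_of_succ_le' c (by exact_mod_cast h2)
    have hstar := star c (n := n + 1) (by omega) hv1
    rw [show n + 1 - 1 = n by ring] at hstar
    have hQ1 : (1:ℝ) ≤ (c.Q (n+1) : ℝ) := by exact_mod_cast Qpos c (by omega) hv1
    have hQn : (0:ℝ) ≤ (c.Q n : ℝ) := by
      rcases eq_or_lt_of_le hn with h | h
      · rw [← h, c.hQneg]; norm_num
      · have := Qpos c (by omega) (Vmono c (m := n) (by omega) hv1); positivity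
    have hσ1 : 0 ≤ σ c (n + 1) := σ_nonneg c (by omega) hv1
    have hσn : 0 ≤ σ c n := σ_nonneg c hn (Vmono c (by omega) hv1)
    rw [Δ_eq_σ c hn hv]
    nlinarith

lemma decomp {k : ℤ} (hk : 1 ≤ k) (hv : V c k) (x y : ℤ) :
    ∃ u v : ℤ, x = u * c.Q (k-1) + v * c.Q k ∧ y = u * c.P (k-1) + v * c.P k := by
  have hD := Dlem c k (by omega) hv
  have hsq := ε_sq k
  refine ⟨-(ε k) * (x * c.P k - y * c.Q k), -(ε k) * (y * c.Q (k-1) - x * c.P (k-1)), ?_, ?_⟩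
  · linear_combination (-(ε k) * x) * hD - x * hsq
  · linear_combination (-(ε k) * y) * hD - y * hsq

lemma best_approx {k : ℤ} (hk : 1 ≤ k) (hv : V c k) (x y : ℤ)
    (hxy : ¬(x = 0 ∧ y = 0)) (hx : |x| < c.Q k) :
    c.Δ (k - 1) ≤ |(x:ℝ) * c.ξ - (y:ℝ)| := by
  obtain ⟨u, v, hxe, hye⟩ := decomp c hk hv x y
  have hQk : 1 ≤ c.Q k := Qpos c (by omega) hv
  have hQk1 : 1 ≤ c.Q (k - 1) := by
    rcases eq_or_lt_of_le hk with h | h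
    · rw [← h]; norm_num [c.hQ0]
    · exact Qpos c (by omega) (Vmono c (by omega) hv)
  have hδ : (x:ℝ) * c.ξ - (y:ℝ) = (u:ℝ) * δ c (k-1) + (v:ℝ) * δ c k := by
    unfold δ
    rw [hxe, hye]
    push_cast
    ring
  have hσk1 : 0 ≤ σ c (k-1) := σ_nonneg c (by omega) (Vmono c (by omega) hv)
  have hσk : 0 ≤ σ c k := σ_nonneg c (by omega) hv
  have hΔσ : c.Δ (k-1) = σ c (k-1) := Δ_eq_σ c (by omega) (Vmono c (by omega) hv)
  have habs := abs_lt.mp hx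
  rcases eq_or_ne v 0 with hv0 | hv0
  · -- v = 0
    subst hv0
    simp only [zero_mul, add_zero] at hxe hye
    have hu0 : u ≠ 0 := by
      rintro rfl
      exact hxy ⟨by simp [hxe], by simp [hye]⟩
    have huR : (1:ℝ) ≤ |(u:ℝ)| := by
      have : 1 ≤ |u| := Int.one_le_abs hu0
      exact_mod_cast this
    rw [hδ]
    push_cast
    rw [zero_mul, add_zero, abs_mul]
    rw [hΔσ]
    have habs2 : |δ c (k-1)| = σ c (k-1) := by
      rw [δ_eq_εσ c (k-1), abs_mul]
      have hε : |(ε (k-1) : ℝ)| = 1 := by exact_mod_cast ε_abs (k-1)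
      rw [hε, one_mul, abs_of_nonneg hσk1]
    rw [habs2]
    nlinarith
  · -- v ≠ 0
    rcases le_or_gt 0 (u * v) with hsgn | hsgn
    · -- same signs (or u = 0): |x| ≥ Q k, contradiction
      exfalso
      rcases lt_or_gt_of_ne hv0 with hvneg | hvpos
      · have hu : u ≤ 0 := by
          by_contra h
          push_neg at h
          nlinarith [mul_pos (by omega : (0:ℤ) < u) (by omega : (0:ℤ) < -v)]
        have h1 : u * c.Q (k-1) ≤ 0 := mul_nonpos_of_nonpos_of_nonneg hu (by omega)
        have h2 : v * c.Q k ≤ -c.Q k := by nlinarith [mul_le_mul_of_nonneg_right (by omega : v ≤ -1) (by omega : (0:ℤ) ≤ c.Q k)]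
        omega
      · have hu : 0 ≤ u := by
          by_contra h
          push_neg at h
          nlinarith [mul_pos (by omega : (0:ℤ) < -u) (by omega : (0:ℤ) < v)]
        have h1 : 0 ≤ u * c.Q (k-1) := mul_nonneg hu (by omega)
        have h2 : c.Q k ≤ v * c.Q k := le_mul_of_one_le_left (by omega) (by omega)
        omega
    · -- opposite signs
      have hδk1 : δ c (k-1) = -(ε k : ℝ) * σ c (k-1) := by
        rw [δ_eq_εσ c (k-1), ε_pred k]; push_cast; ring
      have hδk : δ c k = (ε k : ℝ) * σ c k := δ_eq_εσ c k
      rw [hδ, hδk1, hδk, hΔσ]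
      have hval : (u:ℝ) * (-(ε k : ℝ) * σ c (k-1)) + (v:ℝ) * ((ε k : ℝ) * σ c k)
          = (ε k : ℝ) * ((v:ℝ) * σ c k - (u:ℝ) * σ c (k-1)) := by ring
      rw [hval, abs_mul]
      have hε : |(ε k : ℝ)| = 1 := by exact_mod_cast ε_abs k
      rw [hε, one_mul]
      rcases lt_trichotomy u 0 with hu | hu | hu
      · -- u ≤ -1, v ≥ 1
        have hv1 : 1 ≤ v := by
          by_contra h
          push_neg at h
          nlinarith [mul_nonneg (by omega : (0:ℤ) ≤ -u) (by omega : (0:ℤ) ≤ -v)]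
        have huR : (1:ℝ) ≤ -(u:ℝ) := by exact_mod_cast (by omega : 1 ≤ -u)
        have hvR : (1:ℝ) ≤ (v:ℝ) := by exact_mod_cast hv1
        have : σ c (k-1) ≤ (v:ℝ) * σ c k - (u:ℝ) * σ c (k-1) := by nlinarith
        calc σ c (k-1) ≤ (v:ℝ) * σ c k - (u:ℝ) * σ c (k-1) := this
        _ ≤ |(v:ℝ) * σ c k - (u:ℝ) * σ c (k-1)| := le_abs_self _
      · exfalso; subst hu; simp at hsgn
      · -- u ≥ 1, v ≤ -1
        have hv1 : v ≤ -1 := by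
          by_contra h
          push_neg at h
          nlinarith [mul_nonneg (by omega : (0:ℤ) ≤ u) (by omega : (0:ℤ) ≤ v)]
        have huR : (1:ℝ) ≤ (u:ℝ) := by exact_mod_cast hu
        have hvR : (v:ℝ) ≤ -1 := by exact_mod_cast hv1
        have : (v:ℝ) * σ c k - (u:ℝ) * σ c (k-1) ≤ -(σ c (k-1)) := by nlinarith
        calc σ c (k-1) ≤ -((v:ℝ) * σ c k - (u:ℝ) * σ c (k-1)) := by linarith
        _ ≤ |(v:ℝ) * σ c k - (u:ℝ) * σ c (k-1)| := neg_le_abs _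

/-- gauge of an integer point -/
noncomputable def G (ξ : ℝ) (x : ℤ × ℤ) (q : ℝ) : ℝ :=
  max (|(x.1 : ℝ)| * Real.exp (-q)) (|(x.1 : ℝ) * ξ - (x.2 : ℝ)| * Real.exp q)

lemma Lx_eq_log_G (ξ : ℝ) (x : ℤ × ℤ) (q : ℝ) : Lx ξ x q = Real.log (G ξ x q) := rfl

lemma G_pos {ξ q : ℝ} {x : ℤ × ℤ} (hx : x ≠ (0, 0)) : 0 < G ξ x q := by
  rcases eq_or_ne x.1 0 with h1 | h1
  · have h2 : x.2 ≠ 0 := by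
      intro h2; apply hx; ext <;> simp [h1, h2]
    have : (1:ℝ) ≤ |(x.2 : ℝ)| := by
      have := Int.one_le_abs h2; exact_mod_cast this
    apply lt_max_of_lt_right
    have : 0 < |(x.1:ℝ) * ξ - (x.2:ℝ)| := by
      rw [h1]; push_cast; simp only [zero_mul, zero_sub, abs_neg]; linarith
    positivity
  · apply lt_max_of_lt_left
    have : (1:ℝ) ≤ |(x.1 : ℝ)| := by
      have := Int.one_le_abs h1; exact_mod_cast this
    positivity

lemma zero_mem_body (ξ q : ℝ) : ((0:ℝ), (0:ℝ)) ∈ body ξ q := by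
  constructor <;> simp <;> positivity

lemma mem_smul_body_iff {ξ q l : ℝ} (hl : 0 < l) (p : ℝ × ℝ) :
    p ∈ l • body ξ q ↔ |p.1| ≤ l * Real.exp q ∧ |p.1 * ξ - p.2| ≤ l * Real.exp (-q) := by
  rw [Set.mem_smul_set_iff_inv_smul_mem₀ hl.ne']
  unfold body
  simp only [Set.mem_setOf_eq, Prod.smul_fst, Prod.smul_snd, smul_eq_mul]
  have h1 : |l⁻¹ * p.1| = l⁻¹ * |p.1| := by
    rw [abs_mul, abs_of_pos (by positivity)]
  have h2 : l⁻¹ * p.1 * ξ - l⁻¹ * p.2 = l⁻¹ * (p.1 * ξ - p.2) := by ring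
  rw [h1, h2, abs_mul, abs_of_pos (show (0:ℝ) < l⁻¹ by positivity)]
  constructor
  · rintro ⟨a, b⟩
    constructor
    · calc |p.1| = l * (l⁻¹ * |p.1|) := by field_simp
      _ ≤ l * Real.exp q := by nlinarith
    · calc |p.1 * ξ - p.2| = l * (l⁻¹ * |p.1 * ξ - p.2|) := by field_simp
      _ ≤ l * Real.exp (-q) := by nlinarith
  · rintro ⟨a, b⟩
    have hinv : (0:ℝ) < l⁻¹ := by positivity
    constructor
    · calc l⁻¹ * |p.1| ≤ l⁻¹ * (l * Real.exp q) := by nlinarith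
      _ = Real.exp q := by field_simp
    · calc l⁻¹ * |p.1 * ξ - p.2| ≤ l⁻¹ * (l * Real.exp (-q)) := by nlinarith
      _ = Real.exp (-q) := by field_simp

lemma G_le_iff_mem {ξ q l : ℝ} (hl : 0 < l) (x : ℤ × ℤ) :
    (((x.1 : ℝ)), ((x.2 : ℝ))) ∈ l • body ξ q ↔ G ξ x q ≤ l := by
  rw [mem_smul_body_iff hl]
  unfold G
  have heq : Real.exp (-q) = (Real.exp q)⁻¹ := Real.exp_neg q
  have hexp : (0:ℝ) < Real.exp q := Real.exp_pos q
  have hexp' : (0:ℝ) < Real.exp (-q) := Real.exp_pos _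
  constructor
  · rintro ⟨a, b⟩
    rw [max_le_iff]
    constructor
    · rw [heq]
      rw [show l = l * Real.exp q * (Real.exp q)⁻¹ by field_simp]
      apply mul_le_mul_of_nonneg_right a (by positivity)
    · rw [show l = l * Real.exp (-q) * Real.exp q by rw [heq]; field_simp]
      apply mul_le_mul_of_nonneg_right b (le_of_lt hexp)
  · intro h
    rw [max_le_iff] at h
    obtain ⟨a, b⟩ := h
    constructor
    · rw [heq] at a
      calc |(x.1:ℝ)| = |(x.1:ℝ)| * (Real.exp q)⁻¹ * Real.exp q := by field_simp
      _ ≤ l * Real.exp q := mul_le_mul_of_nonneg_right a (le_of_lt hexp)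
    · have e1 : |(x.1:ℝ) * ξ - (x.2:ℝ)| = |(x.1:ℝ) * ξ - (x.2:ℝ)| * Real.exp q * Real.exp (-q) := by
        rw [heq]; field_simp
      rw [e1]
      exact mul_le_mul_of_nonneg_right b (le_of_lt hexp')

lemma lam_eq {ξ q : ℝ} (x₀ : ℤ × ℤ) (h0 : x₀ ≠ (0, 0))
    (hmin : ∀ x : ℤ × ℤ, x ≠ (0, 0) → G ξ x₀ q ≤ G ξ x q) :
    lam ξ q 1 = G ξ x₀ q := by
  have hG0 : 0 < G ξ x₀ q := G_pos h0
  have hne : ((x₀.1 : ℝ), (x₀.2 : ℝ)) ≠ (0 : ℝ × ℝ) := by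
    intro h
    apply h0
    have h1 : (x₀.1 : ℝ) = 0 := congrArg Prod.fst h
    have h2 : (x₀.2 : ℝ) = 0 := congrArg Prod.snd h
    ext
    · exact_mod_cast h1
    · exact_mod_cast h2
  have hmem : G ξ x₀ q ∈ {l : ℝ | 0 ≤ l ∧ ∃ v : Fin 1 → ℤ × ℤ,
      LinearIndependent ℝ (fun i => ((((v i).1 : ℝ)), (((v i).2 : ℝ)))) ∧
      ∀ i, ((((v i).1 : ℝ)), (((v i).2 : ℝ))) ∈ l • body ξ q} := by
    refine ⟨le_of_lt hG0, fun _ => x₀, ?_, ?_⟩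
    · apply linearIndependent_unique_iff.mpr
      exact hne
    · intro i
      rw [G_le_iff_mem hG0]
  have hlb : ∀ l ∈ {l : ℝ | 0 ≤ l ∧ ∃ v : Fin 1 → ℤ × ℤ,
      LinearIndependent ℝ (fun i => ((((v i).1 : ℝ)), (((v i).2 : ℝ)))) ∧
      ∀ i, ((((v i).1 : ℝ)), (((v i).2 : ℝ))) ∈ l • body ξ q}, G ξ x₀ q ≤ l := by
    rintro l ⟨hl0, v, hli, hmem'⟩
    have hx : v 0 ≠ (0, 0) := by
      intro h
      have := hli.ne_zero 0
      apply this
      rw [h]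
      simp
    rcases eq_or_lt_of_le hl0 with h | h
    · exfalso
      have hbody : (body ξ q).Nonempty := ⟨_, zero_mem_body ξ q⟩
      have := hmem' 0
      rw [← h, Set.zero_smul_set hbody] at this
      simp only [Set.mem_zero] at this
      have h1 : ((v 0).1 : ℝ) = 0 := congrArg Prod.fst this
      have h2 : ((v 0).2 : ℝ) = 0 := congrArg Prod.snd this
      apply hx
      ext
      · exact_mod_cast h1
      · exact_mod_cast h2
    · have := (G_le_iff_mem h (v 0)).mp (hmem' 0)
      exact le_trans (hmin (v 0) hx) this
  unfold lam
  exact le_antisymm (csInf_le ⟨0, fun l hl => hl.1⟩ hmem) (le_csInf ⟨_, hmem⟩ hlb)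

lemma cross {A B q t : ℝ} (hA : 0 < A) (hB : 0 < B) (h : Real.exp (2*t) = B / A) :
    (q ≤ t ↔ A * Real.exp q ≤ B * Real.exp (-q)) := by
  have hq : (0:ℝ) < Real.exp q := Real.exp_pos q
  constructor
  · intro hqt
    have h1 : Real.exp (2*q) ≤ Real.exp (2*t) := Real.exp_le_exp.mpr (by linarith)
    rw [h] at h1
    have h2 : A * Real.exp (2*q) ≤ B := by
      rw [le_div_iff₀ hA] at h1; nlinarith
    have h3 : Real.exp (2*q) = Real.exp q * Real.exp q := by
      rw [← Real.exp_add]; ring_nf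
    have h4 : Real.exp (-q) = (Real.exp q)⁻¹ := Real.exp_neg q
    rw [h4]
    rw [h3] at h2
    calc A * Real.exp q = (A * Real.exp q * Real.exp q) * (Real.exp q)⁻¹ := by field_simp
    _ ≤ B * (Real.exp q)⁻¹ := by
        apply mul_le_mul_of_nonneg_right _ (by positivity)
        nlinarith
  · intro hle
    have h3 : Real.exp (2*q) = Real.exp q * Real.exp q := by
      rw [← Real.exp_add]; ring_nf
    have h4 : Real.exp (-q) = (Real.exp q)⁻¹ := Real.exp_neg q
    rw [h4] at hle
    have h2 : A * Real.exp (2*q) ≤ B := by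
      rw [h3]
      calc A * (Real.exp q * Real.exp q) = (A * Real.exp q) * Real.exp q := by ring
      _ ≤ (B * (Real.exp q)⁻¹) * Real.exp q := mul_le_mul_of_nonneg_right hle (by positivity)
      _ = B := by field_simp
    have h1 : Real.exp (2*q) ≤ Real.exp (2*t) := by
      rw [h, le_div_iff₀ hA]; nlinarith
    have := Real.exp_le_exp.mp h1
    linarith

lemma cross' {A B q t : ℝ} (hA : 0 < A) (hB : 0 < B) (h : Real.exp (2*t) = B / A) :
    (t ≤ q ↔ B * Real.exp (-q) ≤ A * Real.exp q) := by
  have hq : (0:ℝ) < Real.exp q := Real.exp_pos q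
  have hnq : (0:ℝ) < Real.exp (-q) := Real.exp_pos _
  have h' : Real.exp (2 * (-t)) = A / B := by
    rw [show 2 * (-t) = -(2*t) by ring, Real.exp_neg, h]
    rw [inv_div]
  have := cross hB hA h' (q := -q)
  rw [neg_neg] at this
  constructor
  · intro ht; exact (this.mp (by linarith))
  · intro hle; linarith [this.mpr hle]

lemma exp_two_qcrit {n : ℤ} (hQ : (0:ℝ) < (c.Q n : ℝ)) (hΔ : 0 < c.Δ (n-1)) :
    Real.exp (2 * c.qcrit n) = (c.Q n : ℝ) / c.Δ (n-1) := by
  unfold CFData.qcrit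
  rw [show 2 * ((Real.log (c.Q n : ℝ) - Real.log (c.Δ (n - 1))) / 2)
    = Real.log (c.Q n : ℝ) - Real.log (c.Δ (n - 1)) by ring]
  rw [Real.exp_sub, Real.exp_log hQ, Real.exp_log hΔ]

lemma qcrit_zero : c.qcrit 0 = 0 := by
  unfold CFData.qcrit
  rw [c.hQ0, show (0:ℤ) - 1 = -1 by ring, Δ_neg_one]
  norm_num

lemma G_conv {n : ℤ} (hn : 0 ≤ n) (hv : V c n) (q : ℝ) :
    G c.ξ (c.Q n, c.P n) q = max ((c.Q n : ℝ) * Real.exp (-q)) (c.Δ n * Real.exp q) := by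
  unfold G CFData.Δ
  congr 2
  rw [abs_of_nonneg]
  have := Qpos c hn hv
  positivity

lemma conv_ne_zero {n : ℤ} (hn : 0 ≤ n) (hv : V c n) : (c.Q n, c.P n) ≠ ((0:ℤ), (0:ℤ)) := by
  intro h
  have h1 : c.Q n = 0 := congrArg Prod.fst h
  have := Qpos c hn hv
  omega

lemma G_min_on_interval {n : ℤ} (hn : 1 ≤ n) (hv : V c n) {q : ℝ}
    (hq1 : c.qcrit (n-1) ≤ q) (hq2 : q ≤ c.qcrit n) :
    ∀ x : ℤ × ℤ, x ≠ (0, 0) → G c.ξ (c.Q (n-1), c.P (n-1)) q ≤ G c.ξ x q := by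
  intro x hx
  have hvn1 : V c (n-1) := Vmono c (by omega) hv
  have hΔn1 : 0 < c.Δ (n-1) := by
    apply Δ_pos c (by omega)
    rw [show n - 1 + 2 = n + 1 by ring]
    exact succ_le_of_lt' c hv
  have hΔn2 : 0 < c.Δ (n-2) := by
    apply Δ_pos c (by omega)
    rw [show n - 2 + 2 = n by ring]
    exact le_of_lt hv
  have hQn : (0:ℝ) < (c.Q n : ℝ) := by exact_mod_cast Qpos c (by omega) hv
  have hQn1 : (0:ℝ) < (c.Q (n-1) : ℝ) := by exact_mod_cast Qpos c (by omega) hvn1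
  have hQn1R : (1:ℝ) ≤ (c.Q (n-1) : ℝ) := by exact_mod_cast Qpos c (by omega) hvn1
  have hQmono : (c.Q (n-1) : ℝ) ≤ (c.Q n : ℝ) := by exact_mod_cast Qmono c hn hv
  have hΔdec : c.Δ (n-1) < c.Δ (n-2) := by
    have := Δ_dec c (n := n - 1) (by omega) (by rw [show n - 1 + 1 = n by ring]; exact le_of_lt hv)
    rw [show n - 1 - 1 = n - 2 by ring] at this
    exact this
  have hexpn : Real.exp (2 * c.qcrit n) = (c.Q n : ℝ) / c.Δ (n-1) := exp_two_qcrit c hQn hΔn1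
  have hexpn1 : Real.exp (2 * c.qcrit (n-1)) = (c.Q (n-1) : ℝ) / c.Δ (n-2) := by
    have := exp_two_qcrit c (n := n - 1) hQn1 (by rw [show n - 1 - 1 = n - 2 by ring]; exact hΔn2)
    rw [show n - 1 - 1 = n - 2 by ring] at this
    exact this
  have hGval := G_conv c (n := n - 1) (by omega) hvn1 q
  rw [hGval]
  set A1 : ℝ := |(x.1 : ℝ)| with hA1
  set A2 : ℝ := |(x.1 : ℝ) * c.ξ - (x.2 : ℝ)| with hA2
  have hGx : G c.ξ x q = max (A1 * Real.exp (-q)) (A2 * Real.exp q) := rfl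
  rw [hGx]
  have hexpq : (0:ℝ) < Real.exp q := Real.exp_pos q
  have hexpnq : (0:ℝ) < Real.exp (-q) := Real.exp_pos _
  rcases le_or_gt (c.Q n : ℝ) A1 with hc1 | hc1
  · -- |x1| ≥ Q n
    apply le_trans _ (le_max_left _ _)
    apply max_le
    · apply mul_le_mul_of_nonneg_right _ (le_of_lt hexpnq)
      linarith
    · -- Δ (n-1) e^q ≤ Q n e^{-q} ≤ A1 e^{-q}
      have := (cross hΔn1 hQn hexpn).mp hq2
      calc c.Δ (n-1) * Real.exp q ≤ (c.Q n : ℝ) * Real.exp (-q) := this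
      _ ≤ A1 * Real.exp (-q) := mul_le_mul_of_nonneg_right hc1 (le_of_lt hexpnq)
  · rcases le_or_gt (c.Q (n-1) : ℝ) A1 with hc2 | hc2
    · -- Q (n-1) ≤ |x1| < Q n : best approx at k = n
      have hint : |x.1| < c.Q n := by
        have : A1 < (c.Q n : ℝ) := hc1
        exact_mod_cast (by push_cast; exact this : (|x.1| : ℝ) < (c.Q n : ℝ))
      have hBA := best_approx c hn hv x.1 x.2 (by
        intro h; apply hx; ext <;> simp [h.1, h.2]) hint
      apply max_le
      · apply le_trans _ (le_max_left _ _)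
        exact mul_le_mul_of_nonneg_right hc2 (le_of_lt hexpnq)
      · apply le_trans _ (le_max_right _ _)
        exact mul_le_mul_of_nonneg_right hBA (le_of_lt hexpq)
    · -- |x1| < Q (n-1)
      have hA2ge : c.Δ (n-2) ≤ A2 := by
        rcases eq_or_lt_of_le hn with h1 | h1
        · -- n = 1 : x1 = 0
          have hx1 : x.1 = 0 := by
            have : A1 < 1 := by
              rw [← h1] at hc2
              simp only [show (1:ℤ) - 1 = 0 by ring, c.hQ0] at hc2
              exact_mod_cast hc2
            have h2 : |x.1| < 1 := by exact_mod_cast (by push_cast; exact this : (|x.1|:ℝ) < 1)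
            have h3 := abs_lt.mp h2
            omega
          have hx2 : x.2 ≠ 0 := by
            intro h2; apply hx; ext <;> simp [hx1, h2]
          rw [← h1, show (1:ℤ) - 2 = -1 by ring, Δ_neg_one]
          rw [hA2, hx1]
          push_cast
          simp only [zero_mul, zero_sub, abs_neg]
          have := Int.one_le_abs hx2
          exact_mod_cast this
        · -- n ≥ 2 : best approx at k = n-1
          have hint : |x.1| < c.Q (n-1) := by
            exact_mod_cast (by push_cast; exact hc2 : (|x.1| : ℝ) < (c.Q (n-1) : ℝ))
          have hBA := best_approx c (k := n - 1) (by omega) hvn1 x.1 x.2 (by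
            intro h; apply hx; ext <;> simp [h.1, h.2]) hint
          rw [show n - 1 - 1 = n - 2 by ring] at hBA
          exact hBA
      apply le_trans _ (le_max_right _ _)
      apply max_le
      · -- Q (n-1) e^{-q} ≤ Δ (n-2) e^q ≤ A2 e^q
        have := (cross' hΔn2 hQn1 (by rw [hexpn1]) ).mp hq1
        calc (c.Q (n-1) : ℝ) * Real.exp (-q) ≤ c.Δ (n-2) * Real.exp q := this
        _ ≤ A2 * Real.exp q := mul_le_mul_of_nonneg_right hA2ge (le_of_lt hexpq)
      · have : c.Δ (n-1) ≤ A2 := le_trans (le_of_lt hΔdec) hA2ge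
        exact mul_le_mul_of_nonneg_right this (le_of_lt hexpq)

lemma G_min_on_tail {K : ℤ} (hS : c.s = ((K : ℤ) : WithTop ℤ)) {q : ℝ}
    (hq : c.qcrit (K - 1) ≤ q) :
    ∀ x : ℤ × ℤ, x ≠ (0, 0) → G c.ξ (c.Q (K-1), c.P (K-1)) q ≤ G c.ξ x q := by
  intro x hx
  have hK1 : (1:ℤ) ≤ K := by
    have := c.hs; rw [hS] at this; exact_mod_cast this
  have hvK1 : V c (K-1) := by unfold V; rw [hS]; exact_mod_cast (by omega : K - 1 < K)
  have hΔ0 : c.Δ (K-1) = 0 := Δ_zero_last c (by rw [show K - 1 + 1 = K by ring]; exact hS.symm)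
  have hΔn2 : 0 < c.Δ (K-2) := by
    apply Δ_pos c (by omega)
    rw [show K - 2 + 2 = K by ring, hS]
  have hQn1 : (0:ℝ) < (c.Q (K-1) : ℝ) := by exact_mod_cast Qpos c (by omega) hvK1
  have hexpq : (0:ℝ) < Real.exp q := Real.exp_pos q
  have hexpnq : (0:ℝ) < Real.exp (-q) := Real.exp_pos _
  have hexpn1 : Real.exp (2 * c.qcrit (K-1)) = (c.Q (K-1) : ℝ) / c.Δ (K-2) := by
    have := exp_two_qcrit c (n := K - 1) hQn1 (by rw [show K - 1 - 1 = K - 2 by ring]; exact hΔn2)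
    rw [show K - 1 - 1 = K - 2 by ring] at this
    exact this
  rw [G_conv c (by omega) hvK1 q, hΔ0, zero_mul]
  rw [max_eq_left (by positivity)]
  set A1 : ℝ := |(x.1 : ℝ)| with hA1
  set A2 : ℝ := |(x.1 : ℝ) * c.ξ - (x.2 : ℝ)| with hA2
  have hGx : G c.ξ x q = max (A1 * Real.exp (-q)) (A2 * Real.exp q) := rfl
  rw [hGx]
  rcases le_or_gt (c.Q (K-1) : ℝ) A1 with hc | hc
  · apply le_trans _ (le_max_left _ _)
    exact mul_le_mul_of_nonneg_right hc (le_of_lt hexpnq)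
  · have hA2ge : c.Δ (K-2) ≤ A2 := by
      rcases eq_or_lt_of_le hK1 with h1 | h1
      · have hx1 : x.1 = 0 := by
          have : A1 < 1 := by
            rw [← h1] at hc
            simp only [show (1:ℤ) - 1 = 0 by ring, c.hQ0] at hc
            exact_mod_cast hc
          have h2 : |x.1| < 1 := by rw [hA1] at this; exact_mod_cast (by push_cast; exact this : (|x.1|:ℝ) < 1)
          have h3 := abs_lt.mp h2
          omega
        have hx2 : x.2 ≠ 0 := by
          intro h2; apply hx; ext <;> simp [hx1, h2]
        rw [← h1, show (1:ℤ) - 2 = -1 by ring, Δ_neg_one]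
        rw [hA2, hx1]
        push_cast
        simp only [zero_mul, zero_sub, abs_neg]
        have := Int.one_le_abs hx2
        exact_mod_cast this
      · have hint : |x.1| < c.Q (K-1) := by
          rw [hA1] at hc
          exact_mod_cast (by push_cast; exact hc : (|x.1|:ℝ) < (c.Q (K-1):ℝ))
        have hBA := best_approx c (k := K - 1) (by omega) hvK1 x.1 x.2 (by
          intro h; apply hx; ext <;> simp [h.1, h.2]) hint
        rw [show K - 1 - 1 = K - 2 by ring] at hBA
        exact hBA
    apply le_trans _ (le_max_right _ _)
    have := (cross' hΔn2 hQn1 (by rw [hexpn1])).mp hq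
    calc (c.Q (K-1) : ℝ) * Real.exp (-q) ≤ c.Δ (K-2) * Real.exp q := this
    _ ≤ A2 * Real.exp q := mul_le_mul_of_nonneg_right hA2ge (le_of_lt hexpq)

lemma LL_on_interval {n : ℤ} (hn : 1 ≤ n) (hv : V c n) {q : ℝ}
    (hq1 : c.qcrit (n-1) ≤ q) (hq2 : q ≤ c.qcrit n) :
    LL c.ξ 1 q = Lx c.ξ (c.Q (n-1), c.P (n-1)) q := by
  unfold LL
  rw [lam_eq (c.Q (n-1), c.P (n-1)) (conv_ne_zero c (by omega) (Vmono c (by omega) hv))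
    (G_min_on_interval c hn hv hq1 hq2), Lx_eq_log_G]

lemma LL_on_tail {K : ℤ} (hS : c.s = ((K : ℤ) : WithTop ℤ)) {q : ℝ}
    (hq : c.qcrit (K - 1) ≤ q) :
    LL c.ξ 1 q = Lx c.ξ (c.Q (K-1), c.P (K-1)) q := by
  have hK1 : (1:ℤ) ≤ K := by
    have := c.hs; rw [hS] at this; exact_mod_cast this
  have hvK1 : V c (K-1) := by unfold V; rw [hS]; exact_mod_cast (by omega : K - 1 < K)
  unfold LL
  rw [lam_eq (c.Q (K-1), c.P (K-1)) (conv_ne_zero c (by omega) hvK1)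
    (G_min_on_tail c hS hq), Lx_eq_log_G]

lemma qcrit_succ_lt {n : ℤ} (hn : 0 ≤ n) (hv : V c (n + 1)) :
    c.qcrit n < c.qcrit (n + 1) := by
  have hvn : V c n := Vmono c (by omega) hv
  have hΔn1 : 0 < c.Δ (n-1) := by
    apply Δ_pos c (by omega)
    rw [show n - 1 + 2 = n + 1 by ring]
    exact le_of_lt hv
  have hΔn : 0 < c.Δ n := by
    apply Δ_pos c (by omega)
    rw [show n + 2 = n + 1 + 1 by ring]
    exact succ_le_of_lt' c (k := n + 1) hv
  have hΔdec : c.Δ n < c.Δ (n-1) := Δ_dec c hn (le_of_lt hv)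
  have hQn : (0:ℝ) < (c.Q n : ℝ) := by exact_mod_cast Qpos c hn hvn
  have hQn1 : (0:ℝ) < (c.Q (n+1) : ℝ) := by exact_mod_cast Qpos c (by omega) hv
  have hQmono : (c.Q n : ℝ) ≤ (c.Q (n+1) : ℝ) := by
    have := Qmono c (n := n + 1) (by omega) hv
    rw [show n + 1 - 1 = n by ring] at this
    exact_mod_cast this
  unfold CFData.qcrit
  rw [show n + 1 - 1 = n by ring]
  have h1 : Real.log (c.Q n : ℝ) - Real.log (c.Δ (n-1)) = Real.log ((c.Q n : ℝ) / c.Δ (n-1)) :=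
    (Real.log_div (by positivity) (by positivity)).symm
  have h2 : Real.log (c.Q (n+1) : ℝ) - Real.log (c.Δ n) = Real.log ((c.Q (n+1) : ℝ) / c.Δ n) :=
    (Real.log_div (by positivity) (by positivity)).symm
  rw [h1, h2]
  have h3 : (c.Q n : ℝ) / c.Δ (n-1) < (c.Q (n+1) : ℝ) / c.Δ n := by
    rw [div_lt_div_iff₀ (by positivity) (by positivity)]
    nlinarith
  have := Real.log_lt_log (by positivity) h3
  linarith

lemma qcrit_mono {m n : ℤ} (hm : 0 ≤ m) (hmn : m < n) (hv : V c n) :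
    c.qcrit m < c.qcrit n := by
  have key : ∀ k : ℤ, m + 1 ≤ k → V c k → c.qcrit m < c.qcrit k := by
    refine Int.le_induction ?_ ?_
    · intro hvk
      exact qcrit_succ_lt c hm hvk
    · intro k hk ih hvk
      have h1 := ih (Vmono c (by omega) hvk)
      have h2 := qcrit_succ_lt c (n := k) (by omega) hvk
      linarith
  exact key n (by omega) hv

lemma qcrit_nonneg {n : ℤ} (hn : 0 ≤ n) (hv : V c n) : 0 ≤ c.qcrit n := by
  rcases eq_or_lt_of_le hn with h | h
  · rw [← h, qcrit_zero]
  · rw [← qcrit_zero c]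
    exact le_of_lt (qcrit_mono c le_rfl h hv)

lemma balance {A B t : ℝ} (hA : 0 < A) (h : Real.exp (2*t) = B / A) :
    A * Real.exp t = B * Real.exp (-t) := by
  have h2 : A * Real.exp (2*t) = B := by rw [h]; field_simp
  have h3 : Real.exp (2*t) = Real.exp t * Real.exp t := by rw [← Real.exp_add]; ring_nf
  have h4 : Real.exp (-t) = (Real.exp t)⁻¹ := Real.exp_neg t
  rw [h3] at h2
  rw [h4, ← h2]
  have : Real.exp t ≠ 0 := (Real.exp_pos t).ne'
  field_simp

lemma LL_at_qcrit {n : ℤ} (hn : 1 ≤ n) (hv : V c n) :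
    LL c.ξ 1 (c.qcrit n) = Real.log (c.Δ (n-1) * Real.exp (c.qcrit n)) := by
  have hq1 : c.qcrit (n-1) ≤ c.qcrit n := by
    have := qcrit_mono c (m := n - 1) (by omega) (by omega) hv
    linarith
  rw [LL_on_interval c hn hv hq1 le_rfl, Lx_eq_log_G]
  have hvn1 : V c (n-1) := Vmono c (by omega) hv
  have hGval := G_conv c (n := n - 1) (by omega) hvn1 (c.qcrit n)
  rw [hGval]
  have hΔn1 : 0 < c.Δ (n-1) := by
    apply Δ_pos c (by omega)
    rw [show n - 1 + 2 = n + 1 by ring]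
    exact succ_le_of_lt' c hv
  have hQn : (0:ℝ) < (c.Q n : ℝ) := by exact_mod_cast Qpos c (by omega) hv
  have hQmono : (c.Q (n-1) : ℝ) ≤ (c.Q n : ℝ) := by exact_mod_cast Qmono c hn hv
  have hbal : c.Δ (n-1) * Real.exp (c.qcrit n) = (c.Q n : ℝ) * Real.exp (-(c.qcrit n)) :=
    balance hΔn1 (exp_two_qcrit c hQn hΔn1)
  congr 1
  apply max_eq_right
  rw [hbal]
  apply mul_le_mul_of_nonneg_right hQmono (le_of_lt (Real.exp_pos _))

lemma Qgrow2 : ∀ n : ℤ, 0 ≤ n → V c n → n ≤ 2 * c.Q n ∧ n - 1 ≤ 2 * c.Q (n - 1) := by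
  refine Int.le_induction ?_ ?_
  · intro _
    rw [c.hQ0, show (0:ℤ) - 1 = -1 by ring, c.hQneg]
    omega
  · intro n hn ih hv
    have hvn : V c n := Vmono c (by omega) hv
    obtain ⟨h1, h2⟩ := ih hvn
    have hrec := c.hQrec (n + 1) (by omega) hv
    rw [show n + 1 - 2 = n - 1 by ring, show n + 1 - 1 = n by ring] at hrec
    have ha : 1 ≤ c.a (n + 1) := c.ha (n + 1) (by omega) hv
    have hQn : 1 ≤ c.Q n := Qpos c (by omega) hvn
    constructor
    · have : c.Q (n - 1) + c.Q n ≤ c.Q (n + 1) := by nlinarith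
      omega
    · rw [show n + 1 - 1 = n by ring]
      omega

lemma qcrit_ge_halflog {n : ℤ} (hn : 1 ≤ n) (hv : V c n) :
    Real.log (c.Q n : ℝ) / 2 ≤ c.qcrit n := by
  have hΔ1 : c.Δ (n-1) ≤ 1 := Δ_le_one c (by omega) (Vmono c (by omega) hv)
  have hlog : Real.log (c.Δ (n-1)) ≤ 0 := by
    rcases eq_or_lt_of_le (Δ_nonneg c (n-1)) with h | h
    · rw [← h, Real.log_zero]
    · exact Real.log_nonpos (le_of_lt h) hΔ1
  unfold CFData.qcrit
  linarith

lemma qcrit_unbounded (hS : c.s = ⊤) (B : ℝ) : ∃ n : ℤ, 0 ≤ n ∧ V c n ∧ B < c.qcrit n := by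
  have hVall : ∀ n : ℤ, V c n := by intro n; unfold V; rw [hS]; exact WithTop.coe_lt_top n
  obtain ⟨m, hm⟩ := exists_nat_gt (2 * Real.exp (2 * B) + 2)
  refine ⟨(m : ℤ), by positivity, hVall _, ?_⟩
  have hmz : 1 ≤ (m:ℤ) := by
    have h0 : (0:ℝ) < 2 * Real.exp (2*B) + 2 := by positivity
    have : (2:ℝ) < (m:ℝ) := by nlinarith [Real.exp_pos (2*B)]
    exact_mod_cast (by exact_mod_cast (by linarith : (1:ℝ) ≤ (m:ℝ)) : (1:ℝ) ≤ ((m:ℤ):ℝ))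
  have hQ := (Qgrow2 c (m:ℤ) (by positivity) (hVall _)).1
  have hQR : ((m:ℤ):ℝ) ≤ 2 * (c.Q (m:ℤ) : ℝ) := by exact_mod_cast hQ
  have hmR : 2 * Real.exp (2*B) + 2 < ((m:ℤ):ℝ) := by push_cast; exact_mod_cast hm
  have hQbig : Real.exp (2*B) < (c.Q (m:ℤ) : ℝ) := by linarith
  have hQpos : (0:ℝ) < (c.Q (m:ℤ) : ℝ) := by exact_mod_cast Qpos c (by positivity) (hVall _)
  have hlog : 2 * B < Real.log (c.Q (m:ℤ) : ℝ) := by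
    have := Real.log_lt_log (Real.exp_pos _) hQbig
    rw [Real.log_exp] at this
    exact this
  have := qcrit_ge_halflog c hmz (hVall _)
  linarith

lemma isLocalMaxOn_of_radius {f : ℝ → ℝ} {a εr : ℝ} (hε : 0 < εr)
    (h : ∀ q, 0 ≤ q → |q - a| < εr → f q ≤ f a) : IsLocalMaxOn f (Set.Ici 0) a := by
  have hball : Metric.ball a εr ∈ nhds a := Metric.ball_mem_nhds a hε
  have hmem : Metric.ball a εr ∈ nhdsWithin a (Set.Ici 0) := mem_nhdsWithin_of_mem_nhds hball
  filter_upwards [hmem, self_mem_nhdsWithin] with q hq hq0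
  exact h q hq0 (by rw [← Real.dist_eq]; exact hq)

lemma exp_log_div {A B : ℝ} (hA : 0 < A) (hB : 0 < B) :
    Real.exp (2 * ((Real.log B - Real.log A) / 2)) = B / A := by
  rw [show 2 * ((Real.log B - Real.log A) / 2) = Real.log B - Real.log A by ring]
  rw [Real.exp_sub, Real.exp_log hB, Real.exp_log hA]

lemma qcrit_isLocalMax {n : ℤ} (hn : 0 ≤ n) (hv : V c n) :
    IsLocalMaxOn (LL c.ξ 1) (Set.Ici 0) (c.qcrit n) := by
  rcases eq_or_lt_of_le hn with h0 | h0
  · -- n = 0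
    rw [← h0, qcrit_zero c]
    have hs1 : ((1:ℤ) : WithTop ℤ) ≤ c.s := by exact_mod_cast c.hs
    rcases eq_or_succ_le c hs1 with hS | h2
    · -- s = 1 : tail everywhere
      have hform : ∀ t : ℝ, 0 ≤ t → LL c.ξ 1 t = Real.log ((c.Q 0 : ℝ) * Real.exp (-t)) := by
        intro t ht
        have := LL_on_tail c (K := 1) hS.symm (q := t) (by
          rw [show (1:ℤ) - 1 = 0 by ring, qcrit_zero c]; exact ht)
        rw [show (1:ℤ) - 1 = 0 by ring] at this
        rw [this, Lx_eq_log_G, G_conv c le_rfl (V0 c) t]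
        have hΔ0 : c.Δ 0 = 0 := Δ_zero_last c (by rw [show (0:ℤ) + 1 = 1 by ring]; exact hS)
        have hQ00 : (0:ℝ) < (c.Q 0 : ℝ) := by rw [c.hQ0]; norm_num
        rw [hΔ0, zero_mul, max_eq_left (by positivity)]
      apply isLocalMaxOn_of_radius (εr := 1) one_pos
      intro q hq _
      rw [hform q hq, hform 0 le_rfl]
      have hQ0 : (0:ℝ) < (c.Q 0 : ℝ) := by rw [c.hQ0]; norm_num
      apply Real.log_le_log (by positivity)
      apply mul_le_mul_of_nonneg_left _ (le_of_lt hQ0)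
      exact Real.exp_le_exp.mpr (by linarith)
    · -- 2 ≤ s
      have hv1 : V c 1 := lt_of_succ_le' c (by exact_mod_cast h2)
      have hq1pos : 0 < c.qcrit 1 := by
        rw [← qcrit_zero c]
        have := qcrit_succ_lt c le_rfl (by rw [show (0:ℤ) + 1 = 1 by ring]; exact hv1)
        rw [show (0:ℤ) + 1 = 1 by ring] at this
        rw [qcrit_zero c] at this ⊢
        linarith [this]
      apply isLocalMaxOn_of_radius hq1pos
      intro q hq hqball
      have hqle : q ≤ c.qcrit 1 := by
        rw [abs_lt] at hqball
        linarith [hqball.2]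
      have hform : ∀ t : ℝ, 0 ≤ t → t ≤ c.qcrit 1 →
          LL c.ξ 1 t = Real.log (max (Real.exp (-t)) (c.ξ * Real.exp t)) := by
        intro t ht htle
        have := LL_on_interval c (n := 1) le_rfl hv1 (q := t) (by
          rw [show (1:ℤ) - 1 = 0 by ring, qcrit_zero c]; exact ht) htle
        rw [show (1:ℤ) - 1 = 0 by ring] at this
        rw [this, Lx_eq_log_G, G_conv c le_rfl (V0 c) t, c.hQ0, Δ_zero_eq c]
        norm_num
      have hLL0 : LL c.ξ 1 0 = 0 := by
        rw [hform 0 le_rfl (le_of_lt hq1pos)]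
        rw [neg_zero, Real.exp_zero, mul_one]
        rw [max_eq_left (by linarith [c.hξhalf])]
        exact Real.log_one
      rw [hform q hq hqle, hLL0]
      -- show log (...) ≤ 0
      have hξpos : 0 < c.ξ := by
        have := σ_pos c (k := 0) (by omega) (by exact_mod_cast h2)
        rw [σ_zero c] at this
        exact this
      have hσ1 : 0 ≤ σ c 1 := σ_nonneg c (by omega) hv1
      have hstar := star c (n := 1) (by omega) hv1
      rw [show (1:ℤ) - 1 = 0 by ring, σ_zero c, c.hQ0] at hstar
      push_cast at hstar
      -- ξ * Q 1 ≤ 1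
      have hξQ1 : c.ξ * (c.Q 1 : ℝ) ≤ 1 := by nlinarith
      have hQ1pos : (0:ℝ) < (c.Q 1 : ℝ) := by exact_mod_cast Qpos c (by omega) hv1
      have hΔ0 : c.Δ 0 = c.ξ := Δ_zero_eq c
      have hexp1 : Real.exp (2 * c.qcrit 1) = (c.Q 1 : ℝ) / c.ξ := by
        have := exp_two_qcrit c (n := 1) hQ1pos (by rw [show (1:ℤ) - 1 = 0 by ring, hΔ0]; exact hξpos)
        rw [show (1:ℤ) - 1 = 0 by ring, hΔ0] at this
        exact this
      apply Real.log_nonpos (le_max_iff.mpr (Or.inl (by positivity)))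
      apply max_le
      · rw [Real.exp_le_one_iff]; linarith
      · -- ξ e^q ≤ ξ e^{q1} ≤ 1
        have h1 : c.ξ * Real.exp q ≤ c.ξ * Real.exp (c.qcrit 1) :=
          mul_le_mul_of_nonneg_left (Real.exp_le_exp.mpr hqle) (le_of_lt hξpos)
        have h2' : (c.ξ * Real.exp (c.qcrit 1))^2 = c.ξ * (c.Q 1 : ℝ) := by
          have hsq : Real.exp (c.qcrit 1) * Real.exp (c.qcrit 1) = Real.exp (2 * c.qcrit 1) := by
            rw [← Real.exp_add]; ring_nf
          calc (c.ξ * Real.exp (c.qcrit 1))^2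
              = c.ξ^2 * (Real.exp (c.qcrit 1) * Real.exp (c.qcrit 1)) := by ring
          _ = c.ξ^2 * ((c.Q 1 : ℝ) / c.ξ) := by rw [hsq, hexp1]
          _ = c.ξ * (c.Q 1 : ℝ) := by field_simp
        have h3 : c.ξ * Real.exp (c.qcrit 1) ≤ 1 := by nlinarith [Real.exp_pos (c.qcrit 1), hξpos]
        linarith
  · -- n ≥ 1
    have hn1 : 1 ≤ n := h0
    have hvn1 : V c (n-1) := Vmono c (by omega) hv
    have hΔn1 : 0 < c.Δ (n-1) := by
      apply Δ_pos c (by omega)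
      rw [show n - 1 + 2 = n + 1 by ring]
      exact succ_le_of_lt' c hv
    have hQn : (0:ℝ) < (c.Q n : ℝ) := by exact_mod_cast Qpos c (by omega) hv
    have hQn1 : (0:ℝ) < (c.Q (n-1) : ℝ) := by exact_mod_cast Qpos c (by omega) hvn1
    have hQstrict : (c.Q (n-1) : ℝ) < (c.Q n : ℝ) := by
      have := Qstrict c (n := n - 1) (by omega) (by rw [show n - 1 + 1 = n by ring]; exact hv)
      rw [show n - 1 + 1 = n by ring] at this
      exact_mod_cast this
    set vmid : ℝ := (Real.log (c.Q (n-1) : ℝ) - Real.log (c.Δ (n-1))) / 2 with hvmid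
    have hexpv : Real.exp (2 * vmid) = (c.Q (n-1) : ℝ) / c.Δ (n-1) := exp_log_div hΔn1 hQn1
    have hexpn : Real.exp (2 * c.qcrit n) = (c.Q n : ℝ) / c.Δ (n-1) := exp_two_qcrit c hQn hΔn1
    have hvmid_lt : vmid < c.qcrit n := by
      unfold CFData.qcrit
      have := Real.log_lt_log hQn1 hQstrict
      rw [hvmid]
      linarith
    have hqlt : c.qcrit (n-1) < c.qcrit n := qcrit_mono c (by omega) (by omega) hv
    have hbal : c.Δ (n-1) * Real.exp (c.qcrit n) = (c.Q n : ℝ) * Real.exp (-(c.qcrit n)) :=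
      balance hΔn1 hexpn
    have hLLval := LL_at_qcrit c hn1 hv
    have hleft : ∀ q : ℝ, max (c.qcrit (n-1)) vmid ≤ q → q ≤ c.qcrit n →
        LL c.ξ 1 q ≤ LL c.ξ 1 (c.qcrit n) := by
      intro q hq1 hq2
      have hq1' : c.qcrit (n-1) ≤ q := le_trans (le_max_left _ _) hq1
      have hqv : vmid ≤ q := le_trans (le_max_right _ _) hq1
      rw [LL_on_interval c hn1 hv hq1' hq2, Lx_eq_log_G, G_conv c (by omega) hvn1 q, hLLval]
      apply Real.log_le_log (by positivity)
      apply max_le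
      · have := (cross' hΔn1 hQn1 hexpv).mp hqv
        calc (c.Q (n-1) : ℝ) * Real.exp (-q) ≤ c.Δ (n-1) * Real.exp q := this
        _ ≤ c.Δ (n-1) * Real.exp (c.qcrit n) :=
            mul_le_mul_of_nonneg_left (Real.exp_le_exp.mpr hq2) (le_of_lt hΔn1)
      · exact mul_le_mul_of_nonneg_left (Real.exp_le_exp.mpr hq2) (le_of_lt hΔn1)
    rcases eq_or_succ_le c (succ_le_of_lt' c hv) with hS | h2
    · -- n + 1 = s : tail on the right
      have hright : ∀ q : ℝ, c.qcrit n ≤ q → LL c.ξ 1 q ≤ LL c.ξ 1 (c.qcrit n) := by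
        intro q hq
        have hform := LL_on_tail c (K := n + 1) hS.symm (q := q) (by
          rw [show n + 1 - 1 = n by ring]; exact hq)
        rw [show n + 1 - 1 = n by ring] at hform
        rw [hform, Lx_eq_log_G, G_conv c (by omega) hv q, hLLval]
        have hΔn : c.Δ n = 0 := Δ_zero_last c hS
        rw [hΔn, zero_mul, max_eq_left (by positivity)]
        apply Real.log_le_log (by positivity)
        rw [hbal]
        exact mul_le_mul_of_nonneg_left (Real.exp_le_exp.mpr (by linarith)) (le_of_lt hQn)
      set εr : ℝ := c.qcrit n - max (c.qcrit (n-1)) vmid with hεr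
      have hεpos : 0 < εr := by
        rw [hεr]
        rcases max_cases (c.qcrit (n-1)) vmid with ⟨he, _⟩ | ⟨he, _⟩ <;> rw [he] <;> linarith
      apply isLocalMaxOn_of_radius hεpos
      intro q hq hball
      rw [abs_lt] at hball
      rcases le_total q (c.qcrit n) with hc | hc
      · exact hleft q (by rw [hεr] at hball; linarith [hball.1]) hc
      · exact hright q hc
    · -- n + 2 ≤ s
      rw [show n + 1 + 1 = n + 2 by ring] at h2
      have hv1 : V c (n + 1) := lt_of_succ_le' c (by rw [show n + 1 + 1 = n + 2 by ring]; exact h2)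
      have hΔn : 0 < c.Δ n := Δ_pos c (by omega) h2
      have hΔdec : c.Δ n < c.Δ (n-1) := Δ_dec c (by omega) (le_of_lt hv1)
      set wmid : ℝ := (Real.log (c.Q n : ℝ) - Real.log (c.Δ n)) / 2 with hwmid
      have hexpw : Real.exp (2 * wmid) = (c.Q n : ℝ) / c.Δ n := exp_log_div hΔn hQn
      have hq_lt_w : c.qcrit n < wmid := by
        unfold CFData.qcrit
        have := Real.log_lt_log hΔn hΔdec
        rw [hwmid]
        linarith
      have hqlt1 : c.qcrit n < c.qcrit (n+1) := qcrit_succ_lt c (by omega) hv1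
      have hright : ∀ q : ℝ, c.qcrit n ≤ q → q ≤ min (c.qcrit (n+1)) wmid →
          LL c.ξ 1 q ≤ LL c.ξ 1 (c.qcrit n) := by
        intro q hq hq2
        have hform := LL_on_interval c (n := n + 1) (by omega) hv1 (q := q) (by
          rw [show n + 1 - 1 = n by ring]; exact hq) (le_trans hq2 (min_le_left _ _))
        rw [show n + 1 - 1 = n by ring] at hform
        rw [hform, Lx_eq_log_G, G_conv c (by omega) hv q, hLLval]
        apply Real.log_le_log (by positivity)
        rw [hbal]
        apply max_le
        · exact mul_le_mul_of_nonneg_left (Real.exp_le_exp.mpr (by linarith)) (le_of_lt hQn)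
        · have hqw : q ≤ wmid := le_trans hq2 (min_le_right _ _)
          have := (cross hΔn hQn hexpw).mp hqw
          calc c.Δ n * Real.exp q ≤ (c.Q n : ℝ) * Real.exp (-q) := this
          _ ≤ (c.Q n : ℝ) * Real.exp (-(c.qcrit n)) :=
              mul_le_mul_of_nonneg_left (Real.exp_le_exp.mpr (by linarith)) (le_of_lt hQn)
      set εr : ℝ := min (c.qcrit n - max (c.qcrit (n-1)) vmid)
        (min (c.qcrit (n+1)) wmid - c.qcrit n) with hεr
      have hεpos : 0 < εr := by
        rw [hεr]
        apply lt_min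
        · rcases max_cases (c.qcrit (n-1)) vmid with ⟨he, _⟩ | ⟨he, _⟩ <;> rw [he] <;> linarith
        · rcases min_cases (c.qcrit (n+1)) wmid with ⟨he, _⟩ | ⟨he, _⟩ <;> rw [he] <;> linarith
      apply isLocalMaxOn_of_radius hεpos
      intro q hq hball
      rw [abs_lt] at hball
      have hb1 := hball.1
      have hb2 := hball.2
      rw [hεr] at hb1 hb2
      rcases le_total q (c.qcrit n) with hc | hc
      · apply hleft q _ hc
        have := min_le_left (c.qcrit n - max (c.qcrit (n-1)) vmid)
          (min (c.qcrit (n+1)) wmid - c.qcrit n)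
        linarith
      · apply hright q hc
        have := min_le_right (c.qcrit n - max (c.qcrit (n-1)) vmid)
          (min (c.qcrit (n+1)) wmid - c.qcrit n)
        linarith

lemma localMax_is_qcrit {x : ℝ} (hx0 : 0 ≤ x)
    (hmax : IsLocalMaxOn (LL c.ξ 1) (Set.Ici 0) x) :
    ∃ n : ℤ, 0 ≤ n ∧ V c n ∧ x = c.qcrit n := by
  by_contra hcon
  push_neg at hcon
  -- extract a ball
  have hev : {q : ℝ | LL c.ξ 1 q ≤ LL c.ξ 1 x} ∈ nhdsWithin x (Set.Ici 0) := hmax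
  rw [Metric.mem_nhdsWithin_iff] at hev
  obtain ⟨ε, hε, hsub⟩ := hev
  have hprop : ∀ q : ℝ, 0 ≤ q → |q - x| < ε → LL c.ξ 1 q ≤ LL c.ξ 1 x := by
    intro q hq hd
    exact hsub ⟨by rw [Metric.mem_ball, Real.dist_eq]; exact hd, hq⟩
  by_cases hbig : ∀ n : ℤ, 0 ≤ n → V c n → c.qcrit n ≤ x
  · -- x is beyond all critical points
    rcases eq_top_or_lt_top c.s with hS | hS
    · obtain ⟨n, hn0, hnv, hnx⟩ := qcrit_unbounded c hS x
      exact absurd (hbig n hn0 hnv) (by linarith)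
    · obtain ⟨K, hK⟩ := WithTop.ne_top_iff_exists.mp hS.ne
      have hS' : c.s = ((K : ℤ) : WithTop ℤ) := hK.symm
      have hK1 : (1:ℤ) ≤ K := by
        have := c.hs; rw [hS'] at this; exact_mod_cast this
      have hvK1 : V c (K-1) := by unfold V; rw [hS']; exact_mod_cast (by omega : K - 1 < K)
      have hqK : c.qcrit (K-1) ≤ x := hbig (K-1) (by omega) hvK1
      have hne : x ≠ c.qcrit (K-1) := hcon (K-1) (by omega) hvK1
      have hqKlt : c.qcrit (K-1) < x := lt_of_le_of_ne hqK (Ne.symm hne)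
      -- pick q slightly left of x, still ≥ qcrit (K-1)
      set q : ℝ := max (c.qcrit (K-1)) (x - ε/2) with hqdef
      have hqlt : q < x := by
        rw [hqdef]
        rcases max_cases (c.qcrit (K-1)) (x - ε/2) with ⟨he, _⟩ | ⟨he, _⟩ <;> rw [he] <;> linarith
      have hq0 : 0 ≤ q := le_trans (qcrit_nonneg c (by omega) hvK1) (le_max_left _ _)
      have hqball : |q - x| < ε := by
        rw [abs_lt]
        constructor
        · have : x - ε/2 ≤ q := le_max_right _ _
          linarith
        · linarith
      have hqK' : c.qcrit (K-1) ≤ q := le_max_left _ _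
      have hQK : (0:ℝ) < (c.Q (K-1) : ℝ) := by exact_mod_cast Qpos c (by omega) hvK1
      have hΔK : c.Δ (K-1) = 0 := Δ_zero_last c (by rw [show K - 1 + 1 = K by ring]; exact hS'.symm)
      have hform : ∀ t : ℝ, c.qcrit (K-1) ≤ t → LL c.ξ 1 t = Real.log ((c.Q (K-1) : ℝ) * Real.exp (-t)) := by
        intro t ht
        rw [LL_on_tail c hS' ht, Lx_eq_log_G, G_conv c (by omega) hvK1 t, hΔK, zero_mul,
          max_eq_left (by positivity)]
      have h1 := hprop q hq0 hqball
      rw [hform q hqK', hform x hqK] at h1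
      have h2 : (c.Q (K-1) : ℝ) * Real.exp (-x) < (c.Q (K-1) : ℝ) * Real.exp (-q) :=
        mul_lt_mul_of_pos_left (Real.exp_lt_exp.mpr (by linarith)) hQK
      have h3 := Real.log_lt_log (by positivity) h2
      linarith
  · push_neg at hbig
    obtain ⟨m₀, hm₀0, hm₀v, hm₀x⟩ := hbig
    -- least such m
    have hbdd : ∃ b : ℤ, ∀ z : ℤ, (0 ≤ z ∧ V c z ∧ x < c.qcrit z) → b ≤ z := ⟨0, fun z hz => hz.1⟩
    obtain ⟨m, ⟨hm0, hmv, hmx⟩, hmin⟩ :=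
      Int.exists_least_of_bdd (P := fun z => 0 ≤ z ∧ V c z ∧ x < c.qcrit z) hbdd
        ⟨m₀, hm₀0, hm₀v, hm₀x⟩
    have hm1 : 1 ≤ m := by
      rcases eq_or_lt_of_le hm0 with h | h
      · exfalso
        rw [← h, qcrit_zero c] at hmx
        linarith
      · omega
    have hvm1 : V c (m-1) := Vmono c (by omega) hmv
    have hqm1 : c.qcrit (m-1) ≤ x := by
      by_contra hcc
      push_neg at hcc
      have := hmin (m-1) ⟨by omega, hvm1, hcc⟩
      omega
    have hqm1' : c.qcrit (m-1) < x :=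
      lt_of_le_of_ne hqm1 (Ne.symm (hcon (m-1) (by omega) hvm1))
    -- x ∈ (qcrit (m-1), qcrit m)
    have hΔm1 : 0 < c.Δ (m-1) := by
      apply Δ_pos c (by omega)
      rw [show m - 1 + 2 = m + 1 by ring]
      exact succ_le_of_lt' c hmv
    have hQm1 : (0:ℝ) < (c.Q (m-1) : ℝ) := by exact_mod_cast Qpos c (by omega) hvm1
    have hform : ∀ t : ℝ, c.qcrit (m-1) ≤ t → t ≤ c.qcrit m →
        LL c.ξ 1 t = Real.log (max ((c.Q (m-1) : ℝ) * Real.exp (-t)) (c.Δ (m-1) * Real.exp t)) := by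
      intro t h1 h2
      rw [LL_on_interval c hm1 hmv h1 h2, Lx_eq_log_G, G_conv c (by omega) hvm1 t]
    rcases le_or_gt (c.Δ (m-1) * Real.exp x) ((c.Q (m-1) : ℝ) * Real.exp (-x)) with harm | harm
    · -- decreasing arm dominates at x : move left
      set q : ℝ := max (c.qcrit (m-1)) (x - ε/2) with hqdef
      have hqlt : q < x := by
        rcases max_cases (c.qcrit (m-1)) (x - ε/2) with ⟨he, _⟩ | ⟨he, _⟩ <;> rw [hqdef, he] <;> linarith
      have hq0 : 0 ≤ q := le_trans (qcrit_nonneg c (by omega) hvm1) (le_max_left _ _)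
      have hqball : |q - x| < ε := by
        rw [abs_lt]
        refine ⟨?_, by linarith⟩
        have : x - ε/2 ≤ q := le_max_right _ _
        linarith
      have h1 := hprop q hq0 hqball
      rw [hform q (le_max_left _ _) (by linarith [le_of_lt hmx]),
        hform x hqm1 (le_of_lt hmx)] at h1
      have hLLx : Real.log (max ((c.Q (m-1) : ℝ) * Real.exp (-x)) (c.Δ (m-1) * Real.exp x))
          = Real.log ((c.Q (m-1) : ℝ) * Real.exp (-x)) := by rw [max_eq_left harm]
      rw [hLLx] at h1
      have h2 : (c.Q (m-1) : ℝ) * Real.exp (-x) < (c.Q (m-1) : ℝ) * Real.exp (-q) :=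
        mul_lt_mul_of_pos_left (Real.exp_lt_exp.mpr (by linarith)) hQm1
      have h3 : Real.log ((c.Q (m-1) : ℝ) * Real.exp (-x))
          < Real.log ((c.Q (m-1) : ℝ) * Real.exp (-q)) := Real.log_lt_log (by positivity) h2
      have h4 : Real.log ((c.Q (m-1) : ℝ) * Real.exp (-q))
          ≤ Real.log (max ((c.Q (m-1) : ℝ) * Real.exp (-q)) (c.Δ (m-1) * Real.exp q)) :=
        Real.log_le_log (by positivity) (le_max_left _ _)
      linarith
    · -- increasing arm dominates strictly at x : move right
      set q : ℝ := min (c.qcrit m) (x + ε/2) with hqdef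
      have hqgt : x < q := by
        rcases min_cases (c.qcrit m) (x + ε/2) with ⟨he, _⟩ | ⟨he, _⟩ <;> rw [hqdef, he] <;> linarith
      have hq0 : 0 ≤ q := by linarith
      have hqball : |q - x| < ε := by
        rw [abs_lt]
        refine ⟨by linarith, ?_⟩
        have : q ≤ x + ε/2 := min_le_right _ _
        linarith
      have hqle : q ≤ c.qcrit m := min_le_left _ _
      have h1 := hprop q hq0 hqball
      rw [hform q (by linarith) hqle, hform x hqm1 (le_of_lt hmx)] at h1
      have hLLx : Real.log (max ((c.Q (m-1) : ℝ) * Real.exp (-x)) (c.Δ (m-1) * Real.exp x))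
          = Real.log (c.Δ (m-1) * Real.exp x) := by rw [max_eq_right (le_of_lt harm)]
      rw [hLLx] at h1
      have h2 : c.Δ (m-1) * Real.exp x < c.Δ (m-1) * Real.exp q :=
        mul_lt_mul_of_pos_left (Real.exp_lt_exp.mpr hqgt) hΔm1
      have h3 : Real.log (c.Δ (m-1) * Real.exp x) < Real.log (c.Δ (m-1) * Real.exp q) :=
        Real.log_lt_log (by positivity) h2
      have h4 : Real.log (c.Δ (m-1) * Real.exp q)
          ≤ Real.log (max ((c.Q (m-1) : ℝ) * Real.exp (-q)) (c.Δ (m-1) * Real.exp q)) :=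
        Real.log_le_log (by positivity) (le_max_right _ _)
      linarith

end CFHelp

theorem stmt14 (c : CFData) :
    ({x : ℝ | 0 ≤ x ∧ IsLocalMaxOn (LL c.ξ 1) (Set.Ici 0) x} =
      {x : ℝ | ∃ n : ℤ, 0 ≤ n ∧ (n : WithTop ℤ) < c.s ∧ x = c.qcrit n}) ∧
    c.qcrit 0 = 0 ∧
    (∀ m n : ℤ, 0 ≤ m → m < n → (n : WithTop ℤ) < c.s → c.qcrit m < c.qcrit n) ∧
    (∀ n : ℤ, 1 ≤ n → (n : WithTop ℤ) < c.s →
      ∀ q ∈ Set.Icc (c.qcrit (n - 1)) (c.qcrit n),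
        LL c.ξ 1 q = Lx c.ξ (c.Q (n - 1), c.P (n - 1)) q) := by
  refine ⟨?_, CFHelp.qcrit_zero c, ?_, ?_⟩
  · ext x
    simp only [Set.mem_setOf_eq]
    constructor
    · rintro ⟨hx0, hmax⟩
      exact CFHelp.localMax_is_qcrit c hx0 hmax
    · rintro ⟨n, h1, h2, h3⟩
      subst h3
      exact ⟨CFHelp.qcrit_nonneg c h1 h2, CFHelp.qcrit_isLocalMax c h1 h2⟩
  · intro m n hm hmn hv
    exact CFHelp.qcrit_mono c hm hmn hv
  · intro n hn hv q hq
    exact CFHelp.LL_on_interval c hn hv hq.1 hq.2
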